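/- arXiv:2511.14489 — 3 statements merged into one kernel-verified Lean document; each statement's English description precedes it below -/
import Mathlib

section
/- Let μ be the independent Bernoulli measure on Ω = {1,2}^ℕ with marginal weights (p₁, p₂) and ν the independent Bernoulli measure with marginal weights (q₁, q₂), where p₁ + p₂ = 1 = q₁ + q₂, all weights are nonnegative, and p₁ ≤ q₁. Then the d̄-distance satisfies d̄(μ, ν) = inf_{λ ∈ J(μ,ν)} λ{(x,y) : x₀ ≠ y₀} = q₁ − p₁ = (1/2)(|q₁ − p₁| + |q₂ − p₂|). -/
open MeasureTheory

/-- The left shift on `Ω = {1,2}^ℕ` (alphabet `Fin 2`). -/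
def shift (x : ℕ → Fin 2) : ℕ → Fin 2 := fun n => x (n + 1)

/-- `μ` is the independent Bernoulli measure on `{1,2}^ℕ` with weights `(p₁, p₂)`
(symbol `0` has mass `p₁`, symbol `1` has mass `p₂`): all cylinders have product mass. -/
def IsBernoulli (p₁ p₂ : ℝ) (μ : Measure (ℕ → Fin 2)) : Prop :=
  ∀ (n : ℕ) (w : Fin n → Fin 2),
    μ {x | ∀ i : Fin n, x (i : ℕ) = w i} =
      ENNReal.ofReal (∏ i, if w i = 0 then p₁ else p₂)

open Set

namespace DbarAux

/-! ### Cylinder sets and uniqueness of Bernoulli measures -/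

def cyl (n : ℕ) (w : Fin n → Fin 2) : Set (ℕ → Fin 2) := {x | ∀ i : Fin n, x (i : ℕ) = w i}

def cylSet : Set (Set (ℕ → Fin 2)) := {S | ∃ n, ∃ w : Fin n → Fin 2, S = cyl n w}

lemma cyl_inter_of_le {n m : ℕ} (hnm : n ≤ m) (w : Fin n → Fin 2) (v : Fin m → Fin 2)
    (h : (cyl n w ∩ cyl m v).Nonempty) : cyl n w ∩ cyl m v = cyl m v := by
  obtain ⟨z, hz1, hz2⟩ := h
  apply Set.inter_eq_self_of_subset_right
  intro y hy i
  have h1 : (i : ℕ) < m := lt_of_lt_of_le i.2 hnm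
  have := hz1 i
  have := hz2 ⟨i, h1⟩
  have := hy ⟨i, h1⟩
  simp_all

lemma isPiSystem_cylSet : IsPiSystem cylSet := by
  rintro s ⟨n, w, rfl⟩ t ⟨m, v, rfl⟩ hne
  rcases le_total n m with h | h
  · rw [cyl_inter_of_le h w v hne]; exact ⟨m, v, rfl⟩
  · rw [Set.inter_comm] at hne ⊢
    rw [cyl_inter_of_le h v w hne]; exact ⟨n, w, rfl⟩

lemma measurableSet_cyl (n : ℕ) (w : Fin n → Fin 2) : MeasurableSet (cyl n w) := by
  have : cyl n w = ⋂ i : Fin n, (fun x : ℕ → Fin 2 => x (i : ℕ)) ⁻¹' {w i} := by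
    ext x; simp [cyl]
  rw [this]
  exact MeasurableSet.iInter fun i => (measurable_pi_apply _) (measurableSet_singleton _)

lemma generateFrom_cylSet :
    (inferInstance : MeasurableSpace (ℕ → Fin 2)) = MeasurableSpace.generateFrom cylSet := by
  apply le_antisymm
  · -- pi ≤ generateFrom
    have hmeas : ∀ i : ℕ, @Measurable _ _ (MeasurableSpace.generateFrom cylSet) _
        (fun x : ℕ → Fin 2 => x i) := by
      intro i
      refine @measurable_to_countable' (Fin 2) (ℕ → Fin 2) _ _ (MeasurableSpace.generateFrom cylSet) _ fun c => ?_
      have hset : (fun x : ℕ → Fin 2 => x i) ⁻¹' {c}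
          = ⋃ (w : Fin (i+1) → Fin 2) (_ : w ⟨i, Nat.lt_succ_self i⟩ = c), cyl (i+1) w := by
        ext x
        simp only [mem_preimage, mem_singleton_iff, mem_iUnion]
        constructor
        · intro hx
          exact ⟨fun j => x (j : ℕ), hx, fun j => rfl⟩
        · rintro ⟨w, hw, hxw⟩
          have := hxw ⟨i, Nat.lt_succ_self i⟩
          simp only at this
          rw [this, hw]
      rw [hset]
      exact MeasurableSet.iUnion fun w => MeasurableSet.iUnion fun _ =>
        MeasurableSpace.measurableSet_generateFrom ⟨i+1, w, rfl⟩
    rw [show (inferInstance : MeasurableSpace (ℕ → Fin 2)) = MeasurableSpace.pi from rfl]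
    exact iSup_le fun i => MeasurableSpace.comap_le_iff_le_map.2 (hmeas i)
  · exact MeasurableSpace.generateFrom_le fun s ⟨n, w, hs⟩ => hs ▸ measurableSet_cyl n w

lemma bernoulli_unique {p₁ p₂ : ℝ} {μ μ' : Measure (ℕ → Fin 2)}
    [IsProbabilityMeasure μ] [IsProbabilityMeasure μ']
    (hμ : ∀ (n : ℕ) (w : Fin n → Fin 2),
      μ {x | ∀ i : Fin n, x (i : ℕ) = w i} = ENNReal.ofReal (∏ i, if w i = 0 then p₁ else p₂))
    (hμ' : ∀ (n : ℕ) (w : Fin n → Fin 2),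
      μ' {x | ∀ i : Fin n, x (i : ℕ) = w i} = ENNReal.ofReal (∏ i, if w i = 0 then p₁ else p₂)) :
    μ = μ' := by
  refine ext_of_generate_finite cylSet generateFrom_cylSet isPiSystem_cylSet ?_ (by simp)
  rintro s ⟨n, w, rfl⟩
  rw [show cyl n w = {x | ∀ i : Fin n, x (i : ℕ) = w i} from rfl, hμ n w, hμ' n w]


/-! ### The interval coding construction -/

noncomputable def Tm (p q : ℝ) (x : ℝ) : ℝ :=
  if x < p then x / p else if x < q then (x - p) / (q - p) else (x - q) / (1 - q)

noncomputable def f1 (p : ℝ) (x : ℝ) : Fin 2 := if x < p then 0 else 1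
noncomputable def f2 (q : ℝ) (x : ℝ) : Fin 2 := if x < q then 0 else 1

lemma measurable_Tm (p q : ℝ) : Measurable (Tm p q) := by
  unfold Tm
  exact Measurable.ite (measurableSet_lt measurable_id measurable_const)
    (measurable_id.div_const p)
    (Measurable.ite (measurableSet_lt measurable_id measurable_const)
      ((measurable_id.sub_const p).div_const (q - p))
      ((measurable_id.sub_const q).div_const (1 - q)))

lemma measurable_f1 (p : ℝ) : Measurable (f1 p) :=
  Measurable.ite (measurableSet_lt measurable_id measurable_const) measurable_const
    measurable_const

lemma measurable_f2 (q : ℝ) : Measurable (f2 q) :=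
  Measurable.ite (measurableSet_lt measurable_id measurable_const) measurable_const
    measurable_const

lemma vol_affine (c : ℝ) {d : ℝ} (hd : 0 < d) (B : Set ℝ) :
    volume ((fun x => (x - c) / d) ⁻¹' B) = ENNReal.ofReal d * volume B := by
  have h : (fun x : ℝ => (x - c) / d) = (fun y => y + (-(c / d))) ∘ (fun x => x * d⁻¹) := by
    funext x; simp only [Function.comp_apply, div_eq_mul_inv]; ring
  rw [h, Set.preimage_comp, Real.volume_preimage_mul_right (by positivity : d⁻¹ ≠ 0),
    measure_preimage_add_right volume _ B]
  congr 1
  rw [inv_inv, abs_of_pos hd]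

/-- The basic affine-piece computation. -/
lemma piece {T : ℝ → ℝ} {c d : ℝ} (hd : 0 ≤ d)
    (hT : ∀ x ∈ Ico c (c + d), T x = (x - c) / d) (B : Set ℝ) :
    volume (Ico c (c + d) ∩ T ⁻¹' B) = ENNReal.ofReal d * volume (B ∩ Ico 0 1) := by
  rcases eq_or_lt_of_le hd with h0 | h0
  · rw [← h0]; simp
  · have hset : Ico c (c + d) ∩ T ⁻¹' B = (fun x => (x - c) / d) ⁻¹' (B ∩ Ico 0 1) := by
      ext x
      constructor
      · rintro ⟨hx, hxB⟩
        have hTx := hT x hx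
        refine ⟨by simpa [← hTx] using hxB, ?_, ?_⟩
        · exact div_nonneg (sub_nonneg.2 hx.1) hd
        · rw [div_lt_one h0]; linarith [hx.2]
      · rintro ⟨hxB, hx0, hx1⟩
        have h1 : 0 ≤ x - c := by
          rcases div_nonneg_iff.mp hx0 with ⟨h, _⟩ | ⟨_, h⟩
          · exact h
          · linarith
        have h2 : x - c < d := (div_lt_one h0).mp hx1
        have hxI : x ∈ Ico c (c + d) := ⟨by linarith, by linarith⟩
        exact ⟨hxI, by rw [mem_preimage, hT x hxI]; exact hxB⟩
    rw [hset, vol_affine c h0]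

lemma split2 {a b c : ℝ} (hab : a ≤ b) (hbc : b ≤ c) (X : Set ℝ) (hX : MeasurableSet X) :
    volume (Ico a c ∩ X) = volume (Ico a b ∩ X) + volume (Ico b c ∩ X) := by
  rw [← Ico_union_Ico_eq_Ico hab hbc, Set.union_inter_distrib_right]
  exact measure_union
    ((Set.Ico_disjoint_Ico_same).mono inter_subset_left inter_subset_left)
    (measurableSet_Ico.inter hX)

section Params

variable {p q : ℝ} (h0p : 0 ≤ p) (hpq : p ≤ q) (hq1 : q ≤ 1)
include h0p hpq hq1

lemma seg1 (B : Set ℝ) :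
    volume (Ico 0 p ∩ Tm p q ⁻¹' B) = ENNReal.ofReal p * volume (B ∩ Ico 0 1) := by
  have := piece (T := Tm p q) (c := 0) (d := p) h0p
    (fun x hx => by
      rw [Tm, if_pos (by simpa using hx.2), sub_zero]) B
  simpa using this

lemma seg2 (B : Set ℝ) :
    volume (Ico p q ∩ Tm p q ⁻¹' B) = ENNReal.ofReal (q - p) * volume (B ∩ Ico 0 1) := by
  have := piece (T := Tm p q) (c := p) (d := q - p) (by linarith)
    (fun x hx => by
      have h1 : ¬ x < p := not_lt.2 hx.1
      have h2 : x < q := by have := hx.2; linarith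
      rw [Tm, if_neg h1, if_pos h2]) B
  simpa using this

lemma seg3 (B : Set ℝ) :
    volume (Ico q 1 ∩ Tm p q ⁻¹' B) = ENNReal.ofReal (1 - q) * volume (B ∩ Ico 0 1) := by
  have := piece (T := Tm p q) (c := q) (d := 1 - q) (by linarith)
    (fun x hx => by
      have h1 : ¬ x < p := not_lt.2 (le_trans hpq hx.1)
      have h2 : ¬ x < q := not_lt.2 hx.1
      rw [Tm, if_neg h1, if_neg h2]) B
  simpa using this

end Params



/-! ### Cylinder measures by induction -/

lemma measurableSet_codeCyl {T : ℝ → ℝ} (hT : Measurable T) {f : ℝ → Fin 2}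
    (hf : Measurable f) (n : ℕ) (w : Fin n → Fin 2) :
    MeasurableSet {x : ℝ | ∀ i : Fin n, f (T^[(i : ℕ)] x) = w i} := by
  have h : {x : ℝ | ∀ i : Fin n, f (T^[(i : ℕ)] x) = w i}
      = ⋂ i : Fin n, (fun x => f (T^[(i : ℕ)] x)) ⁻¹' {w i} := by
    ext x; simp
  rw [h]
  exact MeasurableSet.iInter fun i =>
    (hf.comp (hT.iterate _)) (measurableSet_singleton _)

lemma cyl_measure {T : ℝ → ℝ} (hT : Measurable T) {f : ℝ → Fin 2} (hf : Measurable f)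
    (u : Fin 2 → ℝ) (hu : ∀ b, 0 ≤ u b) (ρ : Measure ℝ) [IsProbabilityMeasure ρ]
    (hkey : ∀ (b : Fin 2) (B : Set ℝ), MeasurableSet B →
      ρ ({x | f x = b} ∩ T ⁻¹' B) = ENNReal.ofReal (u b) * ρ B) :
    ∀ (n : ℕ) (w : Fin n → Fin 2),
      ρ {x | ∀ i : Fin n, f (T^[(i : ℕ)] x) = w i} = ENNReal.ofReal (∏ i, u (w i)) := by
  intro n
  induction n with
  | zero =>
    intro w
    have h : {x : ℝ | ∀ i : Fin 0, f (T^[(i : ℕ)] x) = w i} = univ :=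
      eq_univ_of_forall fun x i => i.elim0
    simp [h]
  | succ n ih =>
    intro w
    have hset : {x : ℝ | ∀ i : Fin (n + 1), f (T^[(i : ℕ)] x) = w i}
        = {x | f x = w 0} ∩ T ⁻¹' {x | ∀ i : Fin n, f (T^[(i : ℕ)] x) = w i.succ} := by
      ext x
      simp only [mem_setOf_eq, mem_inter_iff, mem_preimage]
      constructor
      · intro h
        refine ⟨by simpa using h 0, fun i => ?_⟩
        have := h i.succ
        rwa [Fin.val_succ, Function.iterate_succ_apply] at this
      · rintro ⟨h0, h1⟩ i
        refine Fin.cases ?_ (fun j => ?_) i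
        · simpa using h0
        · rw [Fin.val_succ, Function.iterate_succ_apply]
          exact h1 j
    rw [hset, hkey _ _ (measurableSet_codeCyl hT hf n _), ih,
      ← ENNReal.ofReal_mul (hu _), Fin.prod_univ_succ]

/-! ### The key per-symbol identities for `f1` and `f2` -/

noncomputable def rho : Measure ℝ := volume.restrict (Ico 0 1)

instance : IsProbabilityMeasure rho := by
  constructor
  rw [rho, Measure.restrict_apply' measurableSet_Ico]
  simp

lemma rho_apply (B : Set ℝ) : rho B = volume (B ∩ Ico 0 1) :=
  Measure.restrict_apply' measurableSet_Ico

section Params2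

variable {p q : ℝ} (h0p : 0 ≤ p) (hpq : p ≤ q) (hq1 : q ≤ 1)
include h0p hpq hq1

lemma key1 (b : Fin 2) (B : Set ℝ) (_hB : MeasurableSet B) :
    rho ({x | f1 p x = b} ∩ Tm p q ⁻¹' B)
      = ENNReal.ofReal (if b = 0 then p else 1 - p) * rho B := by
  rw [rho_apply, rho_apply]
  rcases (by omega : b = 0 ∨ b = 1) with rfl | rfl
  · have h : ({x | f1 p x = 0} ∩ Tm p q ⁻¹' B) ∩ Ico 0 1 = Ico 0 p ∩ Tm p q ⁻¹' B := by
      ext x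
      simp only [f1, mem_inter_iff, mem_setOf_eq, mem_Ico, mem_preimage]
      constructor
      · rintro ⟨⟨hx, hB⟩, h0, h1⟩
        have hxp : x < p := by
          by_contra hc
          rw [if_neg hc] at hx
          exact absurd hx (by decide)
        exact ⟨⟨h0, hxp⟩, hB⟩
      · rintro ⟨⟨h0, hxp⟩, hB⟩
        exact ⟨⟨if_pos hxp, hB⟩, h0, by linarith⟩
    rw [h, seg1 h0p hpq hq1 B, if_pos rfl]
  · have h : ({x | f1 p x = 1} ∩ Tm p q ⁻¹' B) ∩ Ico 0 1 = Ico p 1 ∩ Tm p q ⁻¹' B := by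
      ext x
      simp only [f1, mem_inter_iff, mem_setOf_eq, mem_Ico, mem_preimage]
      constructor
      · rintro ⟨⟨hx, hB⟩, h0, h1⟩
        refine ⟨⟨?_, h1⟩, hB⟩
        by_contra hc
        rw [if_pos (not_le.1 hc)] at hx
        exact absurd hx (by decide)
      · rintro ⟨⟨hpx, h1⟩, hB⟩
        exact ⟨⟨by rw [if_neg (not_lt.2 hpx)], hB⟩, le_trans h0p hpx, h1⟩
    rw [h, split2 hpq hq1 _ ((measurable_Tm p q) _hB), seg2 h0p hpq hq1 B, seg3 h0p hpq hq1 B,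
      ← add_mul, ← ENNReal.ofReal_add (by linarith) (by linarith)]
    norm_num

lemma key2 (b : Fin 2) (B : Set ℝ) (_hB : MeasurableSet B) :
    rho ({x | f2 q x = b} ∩ Tm p q ⁻¹' B)
      = ENNReal.ofReal (if b = 0 then q else 1 - q) * rho B := by
  rw [rho_apply, rho_apply]
  rcases (by omega : b = 0 ∨ b = 1) with rfl | rfl
  · have h : ({x | f2 q x = 0} ∩ Tm p q ⁻¹' B) ∩ Ico 0 1 = Ico 0 q ∩ Tm p q ⁻¹' B := by
      ext x
      simp only [f2, mem_inter_iff, mem_setOf_eq, mem_Ico, mem_preimage]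
      constructor
      · rintro ⟨⟨hx, hB⟩, h0, h1⟩
        refine ⟨⟨h0, ?_⟩, hB⟩
        by_contra hc
        rw [if_neg (not_lt.2 (not_lt.1 hc))] at hx
        exact absurd hx (by decide)
      · rintro ⟨⟨h0, hxq⟩, hB⟩
        exact ⟨⟨if_pos hxq, hB⟩, h0, by linarith⟩
    rw [h, split2 h0p hpq _ ((measurable_Tm p q) _hB), seg1 h0p hpq hq1 B,
      seg2 h0p hpq hq1 B, ← add_mul, ← ENNReal.ofReal_add h0p (by linarith), if_pos rfl]
    norm_num
  · have h : ({x | f2 q x = 1} ∩ Tm p q ⁻¹' B) ∩ Ico 0 1 = Ico q 1 ∩ Tm p q ⁻¹' B := by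
      ext x
      simp only [f2, mem_inter_iff, mem_setOf_eq, mem_Ico, mem_preimage]
      constructor
      · rintro ⟨⟨hx, hB⟩, h0, h1⟩
        refine ⟨⟨?_, h1⟩, hB⟩
        by_contra hc
        rw [if_pos (not_le.1 hc)] at hx
        exact absurd hx (by decide)
      · rintro ⟨⟨hqx, h1⟩, hB⟩
        exact ⟨⟨by rw [if_neg (not_lt.2 hqx)], hB⟩, le_trans (le_trans h0p hpq) hqx, h1⟩
    rw [h, seg3 h0p hpq hq1 B, if_neg (by decide)]

lemma rho_Tm_inv : Measure.map (Tm p q) rho = rho := by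
  ext B hB
  rw [Measure.map_apply (measurable_Tm p q) hB, rho_apply, rho_apply, Set.inter_comm,
    split2 h0p (le_trans hpq hq1) _ ((measurable_Tm p q) hB),
    split2 hpq hq1 _ ((measurable_Tm p q) hB),
    seg1 h0p hpq hq1 B, seg2 h0p hpq hq1 B, seg3 h0p hpq hq1 B,
    ← add_mul, ← add_mul, ← ENNReal.ofReal_add (by linarith) (by linarith),
    ← ENNReal.ofReal_add h0p (by linarith)]
  norm_num

end Params2

noncomputable def Psi (p q : ℝ) : ℝ → (ℕ → Fin 2) × (ℕ → Fin 2) :=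
  fun x => (fun n => f1 p ((Tm p q)^[n] x), fun n => f2 q ((Tm p q)^[n] x))

lemma measurable_Psi (p q : ℝ) : Measurable (Psi p q) :=
  Measurable.prodMk
    (measurable_pi_lambda _ fun n => (measurable_f1 p).comp ((measurable_Tm p q).iterate n))
    (measurable_pi_lambda _ fun n => (measurable_f2 q).comp ((measurable_Tm p q).iterate n))

end DbarAux

open DbarAux Set

/-- for independent Bernoulli measures `μ` (weights `(p₁,p₂)`) and `ν`
(weights `(q₁,q₂)`) with `p₁ ≤ q₁`, the `d̄`-distance (the infimum over joinings of the
probability of disagreement of the zeroth coordinates) equals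
`q₁ − p₁ = (1/2)(|q₁ − p₁| + |q₂ − p₂|)`. -/
theorem dbar_of_bernoulli
    (p₁ p₂ q₁ q₂ : ℝ)
    (hp₁ : 0 ≤ p₁) (hp₂ : 0 ≤ p₂) (hq₁ : 0 ≤ q₁) (hq₂ : 0 ≤ q₂)
    (hp : p₁ + p₂ = 1) (hq : q₁ + q₂ = 1) (hpq : p₁ ≤ q₁)
    (μ ν : Measure (ℕ → Fin 2))
    [IsProbabilityMeasure μ] [IsProbabilityMeasure ν]
    (hμ : IsBernoulli p₁ p₂ μ) (hν : IsBernoulli q₁ q₂ ν) :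
    sInf {r : ℝ | ∃ lam : Measure ((ℕ → Fin 2) × (ℕ → Fin 2)),
        IsProbabilityMeasure lam ∧
        lam.map Prod.fst = μ ∧ lam.map Prod.snd = ν ∧
        lam.map (Prod.map shift shift) = lam ∧
        r = (lam {p | p.1 0 ≠ p.2 0}).toReal} = q₁ - p₁ ∧
    q₁ - p₁ = (1 / 2) * (|q₁ - p₁| + |q₂ - p₂|) := by
  have hq1' : q₁ ≤ 1 := by linarith
  constructor
  · -- the sInf computation
    -- the optimal joining
    set T : ℝ → ℝ := Tm p₁ q₁ with hT
    set lam : Measure ((ℕ → Fin 2) × (ℕ → Fin 2)) := rho.map (Psi p₁ q₁) with hlam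
    haveI hlamP : IsProbabilityMeasure lam :=
      Measure.isProbabilityMeasure_map (measurable_Psi p₁ q₁).aemeasurable
    have hg1 : Measurable (fun x : ℝ => fun n : ℕ => f1 p₁ ((Tm p₁ q₁)^[n] x)) :=
      measurable_pi_lambda _ fun n => (measurable_f1 _).comp ((measurable_Tm _ _).iterate n)
    have hg2 : Measurable (fun x : ℝ => fun n : ℕ => f2 q₁ ((Tm p₁ q₁)^[n] x)) :=
      measurable_pi_lambda _ fun n => (measurable_f2 _).comp ((measurable_Tm _ _).iterate n)
    -- first marginal
    have hfst : lam.map Prod.fst = μ := by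
      have hmm : lam.map Prod.fst
          = rho.map (fun x : ℝ => fun n : ℕ => f1 p₁ ((Tm p₁ q₁)^[n] x)) := by
        rw [hlam, Measure.map_map measurable_fst (measurable_Psi _ _)]
        rfl
      rw [hmm]
      haveI : IsProbabilityMeasure
          (rho.map (fun x : ℝ => fun n : ℕ => f1 p₁ ((Tm p₁ q₁)^[n] x))) :=
        Measure.isProbabilityMeasure_map hg1.aemeasurable
      refine bernoulli_unique (p₁ := p₁) (p₂ := p₂) ?_ hμ
      intro n w
      have hms : MeasurableSet {x : ℕ → Fin 2 | ∀ i : Fin n, x (i : ℕ) = w i} :=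
        measurableSet_cyl n w
      rw [Measure.map_apply hg1 hms]
      have hpre : (fun x : ℝ => fun n : ℕ => f1 p₁ ((Tm p₁ q₁)^[n] x)) ⁻¹'
          {x | ∀ i : Fin n, x (i : ℕ) = w i}
          = {x : ℝ | ∀ i : Fin n, f1 p₁ ((Tm p₁ q₁)^[(i : ℕ)] x) = w i} := rfl
      rw [hpre, cyl_measure (measurable_Tm _ _) (measurable_f1 _)
        (fun b => if b = 0 then p₁ else 1 - p₁)
        (fun b => by split <;> linarith) rho
        (fun b B hB => key1 hp₁ hpq hq1' b B hB) n w]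
      have h12 : (1 : ℝ) - p₁ = p₂ := by linarith
      rw [h12]
    -- second marginal
    have hsnd : lam.map Prod.snd = ν := by
      have hmm : lam.map Prod.snd
          = rho.map (fun x : ℝ => fun n : ℕ => f2 q₁ ((Tm p₁ q₁)^[n] x)) := by
        rw [hlam, Measure.map_map measurable_snd (measurable_Psi _ _)]
        rfl
      rw [hmm]
      haveI : IsProbabilityMeasure
          (rho.map (fun x : ℝ => fun n : ℕ => f2 q₁ ((Tm p₁ q₁)^[n] x))) :=
        Measure.isProbabilityMeasure_map hg2.aemeasurable
      refine bernoulli_unique (p₁ := q₁) (p₂ := q₂) ?_ hν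
      intro n w
      have hms : MeasurableSet {x : ℕ → Fin 2 | ∀ i : Fin n, x (i : ℕ) = w i} :=
        measurableSet_cyl n w
      rw [Measure.map_apply hg2 hms]
      have hpre : (fun x : ℝ => fun n : ℕ => f2 q₁ ((Tm p₁ q₁)^[n] x)) ⁻¹'
          {x | ∀ i : Fin n, x (i : ℕ) = w i}
          = {x : ℝ | ∀ i : Fin n, f2 q₁ ((Tm p₁ q₁)^[(i : ℕ)] x) = w i} := rfl
      rw [hpre, cyl_measure (measurable_Tm _ _) (measurable_f2 _)
        (fun b => if b = 0 then q₁ else 1 - q₁)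
        (fun b => by split <;> linarith) rho
        (fun b B hB => key2 hp₁ hpq hq1' b B hB) n w]
      have h12 : (1 : ℝ) - q₁ = q₂ := by linarith
      rw [h12]
    -- shift invariance
    have hshift : Measurable shift := measurable_pi_lambda _ fun n => measurable_pi_apply (n + 1)
    have hinv : lam.map (Prod.map shift shift) = lam := by
      have hcomm : Prod.map shift shift ∘ Psi p₁ q₁ = Psi p₁ q₁ ∘ Tm p₁ q₁ := by
        funext x
        refine Prod.ext ?_ ?_ <;>
          · funext n
            simp [Psi, shift, Prod.map, Function.iterate_succ_apply]
      rw [hlam, Measure.map_map (hshift.prodMap hshift) (measurable_Psi _ _), hcomm,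
        ← Measure.map_map (measurable_Psi _ _) (measurable_Tm _ _), rho_Tm_inv hp₁ hpq hq1']
    -- the disagreement set
    have hD : MeasurableSet {pr : (ℕ → Fin 2) × (ℕ → Fin 2) | pr.1 0 ≠ pr.2 0} := by
      have h1 : Measurable fun pr : (ℕ → Fin 2) × (ℕ → Fin 2) => pr.1 0 :=
        (measurable_pi_apply 0).comp measurable_fst
      have h2 : Measurable fun pr : (ℕ → Fin 2) × (ℕ → Fin 2) => pr.2 0 :=
        (measurable_pi_apply 0).comp measurable_snd
      exact (measurableSet_eq_fun h1 h2).compl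
    have hval : lam {pr : (ℕ → Fin 2) × (ℕ → Fin 2) | pr.1 0 ≠ pr.2 0}
        = ENNReal.ofReal (q₁ - p₁) := by
      rw [hlam, Measure.map_apply (measurable_Psi _ _) hD]
      have hpre : Psi p₁ q₁ ⁻¹' {pr : (ℕ → Fin 2) × (ℕ → Fin 2) | pr.1 0 ≠ pr.2 0}
          = Ico p₁ q₁ := by
        ext x
        simp only [Psi, mem_preimage, mem_setOf_eq, Function.iterate_zero_apply]
        simp only [mem_Ico, f1, f2]
        by_cases hxp : x < p₁
        · have hxq : x < q₁ := lt_of_lt_of_le hxp hpq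
          simp only [if_pos hxp, if_pos hxq, ne_eq, not_true_eq_false, false_iff, not_and]
          intro h; linarith
        · by_cases hxq : x < q₁
          · simp only [if_neg hxp, if_pos hxq, ne_eq]
            constructor
            · intro _; exact ⟨not_lt.1 hxp, hxq⟩
            · intro _; decide
          · simp only [if_neg hxp, if_neg hxq, ne_eq, not_true_eq_false, false_iff, not_and]
            intro _; exact hxq
      have hsub : Ico p₁ q₁ ⊆ Ico (0 : ℝ) 1 := fun x hx =>
        ⟨le_trans hp₁ hx.1, lt_of_lt_of_le hx.2 hq1'⟩
      rw [hpre, rho_apply, inter_eq_self_of_subset_left hsub, Real.volume_Ico]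
    -- membership
    have hmem : (q₁ - p₁) ∈ {r : ℝ | ∃ lam : Measure ((ℕ → Fin 2) × (ℕ → Fin 2)),
        IsProbabilityMeasure lam ∧
        lam.map Prod.fst = μ ∧ lam.map Prod.snd = ν ∧
        lam.map (Prod.map shift shift) = lam ∧
        r = (lam {p | p.1 0 ≠ p.2 0}).toReal} :=
      ⟨lam, hlamP, hfst, hsnd, hinv, by rw [hval, ENNReal.toReal_ofReal (by linarith)]⟩
    -- lower bound
    have hlow : ∀ r ∈ {r : ℝ | ∃ lam : Measure ((ℕ → Fin 2) × (ℕ → Fin 2)),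
        IsProbabilityMeasure lam ∧
        lam.map Prod.fst = μ ∧ lam.map Prod.snd = ν ∧
        lam.map (Prod.map shift shift) = lam ∧
        r = (lam {p | p.1 0 ≠ p.2 0}).toReal}, q₁ - p₁ ≤ r := by
      rintro r ⟨lam', hpr', hfst', hsnd', -, rfl⟩
      have hA : MeasurableSet {y : ℕ → Fin 2 | y 0 = 0} :=
        (measurable_pi_apply 0) (measurableSet_singleton 0)
      have hcyl1 : ∀ (c₁ c₂ : ℝ) (m : Measure (ℕ → Fin 2)), IsBernoulli c₁ c₂ m →
          m {y : ℕ → Fin 2 | y 0 = 0} = ENNReal.ofReal c₁ := by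
        intro c₁ c₂ m hm
        have h := hm 1 (fun _ => (0 : Fin 2))
        have hs : {x : ℕ → Fin 2 | ∀ i : Fin 1, x (i : ℕ) = (fun _ => (0 : Fin 2)) i}
            = {y : ℕ → Fin 2 | y 0 = 0} := by
          ext y
          simp only [mem_setOf_eq]
          constructor
          · intro h; exact h 0
          · intro h i
            have hi : (i : ℕ) = 0 := by omega
            rw [hi]; exact h
        rw [hs] at h
        simpa using h
      have h1 : lam' (Prod.snd ⁻¹' {y : ℕ → Fin 2 | y 0 = 0}) = ENNReal.ofReal q₁ := by
        have hmap := Measure.map_apply (μ := lam') measurable_snd hA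
        rw [hsnd'] at hmap
        rw [← hmap, hcyl1 q₁ q₂ ν hν]
      have h2 : lam' (Prod.fst ⁻¹' {y : ℕ → Fin 2 | y 0 = 0}) = ENNReal.ofReal p₁ := by
        have hmap := Measure.map_apply (μ := lam') measurable_fst hA
        rw [hfst'] at hmap
        rw [← hmap, hcyl1 p₁ p₂ μ hμ]
      have hsub : (Prod.snd ⁻¹' {y : ℕ → Fin 2 | y 0 = 0} :
            Set ((ℕ → Fin 2) × (ℕ → Fin 2)))
          ⊆ Prod.fst ⁻¹' {y : ℕ → Fin 2 | y 0 = 0} ∪ {pr | pr.1 0 ≠ pr.2 0} := by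
        intro z hz
        by_cases hc : z.1 0 = z.2 0
        · left
          show z.1 0 = 0
          rw [hc]; exact hz
        · right; exact hc
      have h3 : ENNReal.ofReal q₁
          ≤ ENNReal.ofReal p₁ + lam' {pr : (ℕ → Fin 2) × (ℕ → Fin 2) | pr.1 0 ≠ pr.2 0} := by
        rw [← h1, ← h2]
        exact le_trans (measure_mono hsub) (measure_union_le _ _)
      haveI := hpr'
      have hfin : lam' {pr : (ℕ → Fin 2) × (ℕ → Fin 2) | pr.1 0 ≠ pr.2 0} ≠ ⊤ :=
        measure_ne_top _ _
      have h4 := ENNReal.toReal_mono (ENNReal.add_ne_top.2 ⟨ENNReal.ofReal_ne_top, hfin⟩) h3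
      rw [ENNReal.toReal_add ENNReal.ofReal_ne_top hfin, ENNReal.toReal_ofReal hp₁,
        ENNReal.toReal_ofReal hq₁] at h4
      linarith
    refine le_antisymm (csInf_le ⟨0, ?_⟩ hmem) (le_csInf ⟨_, hmem⟩ hlow)
    rintro r ⟨lam', _, _, _, _, rfl⟩
    exact ENNReal.toReal_nonneg
  · have h1 : q₂ - p₂ = -(q₁ - p₁) := by linarith
    rw [abs_of_nonneg (by linarith : (0 : ℝ) ≤ q₁ - p₁), h1, abs_neg,
      abs_of_nonneg (by linarith : (0 : ℝ) ≤ q₁ - p₁)]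
    ring
end

section
/- Fix θ ∈ (0,1), let d_θ be the standard metric on Ω = {1,...,d}^ℕ, and let log J : Ω → ℝ be Lipschitz with respect to d_θ and normalized, i.e. ∑_{a=1}^d J(a⌢x) = 1 for all x ∈ Ω. Let ℒ* denote the dual of the Ruelle operator acting on Borel probability measures, so that (ℒ*)^k(δ_x) = ∑_{w ∈ {1,...,d}^k} J^k(w⌢x) δ_{w⌢x}, where J^k(z) = ∏_{i=0}^{k-1} J(σ^i z). Then for every δ > 0 there exist T ∈ ℕ and a > 0 such that for every k ≥ T and all x, y ∈ Ω there exists a coupling Γ of (ℒ*)^k(δ_x) and (ℒ*)^k(δ_y) with Γ{(x',y') ∈ Ω × Ω : d_θ(x',y') ≤ δ} ≥ a. -/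
open MeasureTheory Finset

/-- The metric `d_θ` on `Ω = {1,…,d}^ℕ`: `d_θ(x,y) = θ^N` where `N` is the first index
at which `x` and `y` disagree, and `d_θ(x,y) = 0` if `x = y`. -/
noncomputable def dTheta {d : ℕ} (θ : ℝ) (x y : ℕ → Fin d) : ℝ :=
  letI := Classical.dec (x = y)
  if h : x = y then 0 else θ ^ Nat.find (Function.ne_iff.mp h)

/-- Prepending a symbol: `a⌢x`. -/
def cons {d : ℕ} (a : Fin d) (x : ℕ → Fin d) : ℕ → Fin d :=
  fun n => match n with
  | 0 => a
  | m + 1 => x m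

/-- The dual `ℒ*` of the Ruelle operator of the potential `log J`, acting on Borel
measures on `Ω = {1,…,d}^ℕ`: it satisfies `∫ ψ d(ℒ*ν) = ∫ ℒψ dν` where
`(ℒψ)(x) = ∑_a J(a⌢x) ψ(a⌢x)`; on a Dirac mass, `ℒ*(δ_x) = ∑_a J(a⌢x) δ_{a⌢x}`. -/
noncomputable def dualRuelle {d : ℕ} (J : (ℕ → Fin d) → ℝ)
    (ν : Measure (ℕ → Fin d)) : Measure (ℕ → Fin d) :=
  ν.bind (fun x => ∑ a : Fin d, ENNReal.ofReal (J (cons a x)) • Measure.dirac (cons a x))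

section Aux

variable {d : ℕ}

/-- Cylinder of length `N` around `u`. -/
def cyl (N : ℕ) (u : ℕ → Fin d) : Set (ℕ → Fin d) := {z | ∀ i < N, z i = u i}

lemma cyl_eq (N : ℕ) (u : ℕ → Fin d) :
    cyl N u = ⋂ i ∈ Finset.range N, (fun z : ℕ → Fin d => z i) ⁻¹' {u i} := by
  ext z; simp [cyl]

lemma measurableSet_cyl (N : ℕ) (u : ℕ → Fin d) : MeasurableSet (cyl N u) := by
  rw [cyl_eq]
  exact Finset.measurableSet_biInter _
    fun i _ => (measurable_pi_apply i) (measurableSet_singleton _)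

lemma isOpen_cyl (N : ℕ) (u : ℕ → Fin d) : IsOpen (cyl N u) := by
  rw [cyl_eq]
  exact isOpen_biInter_finset fun i _ =>
    (continuous_apply i).isOpen_preimage _ (isOpen_discrete _)

lemma dTheta_nonneg {θ : ℝ} (hθ0 : 0 < θ) (x y : ℕ → Fin d) : 0 ≤ dTheta θ x y := by
  unfold dTheta
  split_ifs with h
  · exact le_refl _
  · positivity

lemma dTheta_le_pow {θ : ℝ} (hθ0 : 0 < θ) (hθ1 : θ < 1) {x y : ℕ → Fin d} {N : ℕ}
    (h : ∀ i < N, x i = y i) : dTheta θ x y ≤ θ ^ N := by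
  unfold dTheta
  split_ifs with hxy
  · positivity
  · refine pow_le_pow_of_le_one hθ0.le hθ1.le ?_
    refine (Nat.le_find_iff _ _).mpr fun m hm => ?_
    simpa using h m hm

lemma measurable_cons (a : Fin d) : Measurable (cons a) := by
  apply measurable_pi_lambda
  intro n
  cases n with
  | zero => exact measurable_const
  | succ m => exact measurable_pi_apply m

lemma measurable_RF {J : (ℕ → Fin d) → ℝ} (hJ : Measurable J) :
    Measurable (fun x : ℕ → Fin d =>
      ∑ a : Fin d, ENNReal.ofReal (J (cons a x)) • Measure.dirac (cons a x)) := by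
  apply Measure.measurable_of_measurable_coe
  intro s hs
  simp only [Measure.finset_sum_apply, Measure.smul_apply, smul_eq_mul,
    Measure.dirac_apply' _ hs]
  apply Finset.measurable_sum
  intro a _
  exact (ENNReal.measurable_ofReal.comp (hJ.comp (measurable_cons a))).mul
    ((measurable_one.indicator hs).comp (measurable_cons a))

lemma dualRuelle_apply {J : (ℕ → Fin d) → ℝ} (hJ : Measurable J)
    (ν : Measure (ℕ → Fin d)) {s : Set (ℕ → Fin d)} (hs : MeasurableSet s) :
    dualRuelle J ν s
      = ∫⁻ x, ∑ a : Fin d, ENNReal.ofReal (J (cons a x)) * s.indicator 1 (cons a x) ∂ν := by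
  rw [dualRuelle, Measure.bind_apply hs (measurable_RF hJ).aemeasurable]
  simp only [Measure.finset_sum_apply, Measure.smul_apply, smul_eq_mul,
    Measure.dirac_apply' _ hs]

lemma iterate_mass {J : (ℕ → Fin d) → ℝ} (hJ : Measurable J)
    (hpos : ∀ x, 0 ≤ J x) (hnorm : ∀ x, ∑ a : Fin d, J (cons a x) = 1) :
    ∀ k (x : ℕ → Fin d), (dualRuelle J)^[k] (Measure.dirac x) Set.univ = 1 := by
  intro k
  induction k with
  | zero => intro x; simp
  | succ n ih =>
    intro x
    rw [Function.iterate_succ_apply', dualRuelle_apply hJ _ MeasurableSet.univ]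
    have h1 : ∀ z : ℕ → Fin d,
        ∑ a : Fin d, ENNReal.ofReal (J (cons a z)) * Set.indicator Set.univ 1 (cons a z)
          = 1 := by
      intro z
      simp only [Set.indicator_univ, Pi.one_apply, mul_one]
      rw [← ENNReal.ofReal_sum_of_nonneg (fun a _ => hpos _), hnorm z, ENNReal.ofReal_one]
    simp only [h1]
    rw [lintegral_const, ih x, mul_one]

lemma iterate_cyl_lb {J : (ℕ → Fin d) → ℝ} (hJ : Measurable J)
    (hnorm : ∀ x, ∑ a : Fin d, J (cons a x) = 1)
    {m : ℝ} (hm0 : 0 ≤ m) (hm : ∀ x, m ≤ J x) :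
    ∀ N k, N ≤ k → ∀ (x u : ℕ → Fin d),
      ENNReal.ofReal m ^ N ≤ (dualRuelle J)^[k] (Measure.dirac x) (cyl N u) := by
  intro N
  induction N with
  | zero =>
    intro k _ x u
    have hcyl : cyl 0 u = (Set.univ : Set (ℕ → Fin d)) := by
      ext z; simp [cyl]
    rw [hcyl, iterate_mass hJ (fun z => hm0.trans (hm z)) hnorm k x]
    simp
  | succ N ih =>
    intro k hk x u
    obtain ⟨j, rfl⟩ : ∃ j, k = j + 1 := ⟨k - 1, by omega⟩
    rw [Function.iterate_succ_apply', dualRuelle_apply hJ _ (measurableSet_cyl _ _)]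
    set ν := (dualRuelle J)^[j] (Measure.dirac x) with hν
    have key : ∀ z : ℕ → Fin d,
        ENNReal.ofReal m * (cyl N (fun i => u (i + 1))).indicator 1 z
          ≤ ∑ a : Fin d, ENNReal.ofReal (J (cons a z))
              * (cyl (N + 1) u).indicator 1 (cons a z) := by
      intro z
      have h1 : (cyl (N + 1) u).indicator (1 : (ℕ → Fin d) → ENNReal) (cons (u 0) z)
          = (cyl N (fun i => u (i + 1))).indicator 1 z := by
        by_cases hz : z ∈ cyl N (fun i => u (i + 1))
        · have hmem : cons (u 0) z ∈ cyl (N + 1) u := by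
            intro i hi
            match i with
            | 0 => rfl
            | (p + 1) => exact hz p (by omega)
          rw [Set.indicator_of_mem hmem, Set.indicator_of_mem hz]; rfl
        · have hmem : cons (u 0) z ∉ cyl (N + 1) u := by
            intro hc
            exact hz fun p hp => hc (p + 1) (by omega)
          rw [Set.indicator_of_notMem hmem, Set.indicator_of_notMem hz]
      calc ENNReal.ofReal m * (cyl N (fun i => u (i + 1))).indicator 1 z
          ≤ ENNReal.ofReal (J (cons (u 0) z))
              * (cyl (N + 1) u).indicator 1 (cons (u 0) z) := by
            rw [h1]; exact mul_le_mul_left (ENNReal.ofReal_le_ofReal (hm _)) _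
        _ ≤ _ := Finset.single_le_sum (f := fun a : Fin d =>
              ENNReal.ofReal (J (cons a z)) * (cyl (N + 1) u).indicator 1 (cons a z))
              (fun a _ => zero_le) (Finset.mem_univ (u 0))
    calc ENNReal.ofReal m ^ (N + 1)
        = ENNReal.ofReal m * ENNReal.ofReal m ^ N := by ring
      _ ≤ ENNReal.ofReal m * ν (cyl N (fun i => u (i + 1))) :=
          mul_le_mul_right (ih j (by omega) x _) _
      _ = ∫⁻ z, ENNReal.ofReal m * (cyl N (fun i => u (i + 1))).indicator 1 z ∂ν := by
          rw [lintegral_const_mul _ (measurable_one.indicator (measurableSet_cyl _ _)),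
            lintegral_indicator_one (measurableSet_cyl _ _)]
      _ ≤ _ := lintegral_mono key

end Aux

/-- for a normalized `d_θ`-Lipschitz potential `log J`, for every `δ > 0`
there are `T ∈ ℕ` and `a > 0` such that for every `k ≥ T` and all `x, y` there exists a
coupling `Γ` of `(ℒ*)^k(δ_x)` and `(ℒ*)^k(δ_y)` with
`Γ{(x',y') : d_θ(x',y') ≤ δ} ≥ a`. -/
theorem exists_coupling_mass_near_diagonal
    (d : ℕ) (θ : ℝ) (hθ0 : 0 < θ) (hθ1 : θ < 1)
    (J : (ℕ → Fin d) → ℝ) (hJpos : ∀ x, 0 < J x)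
    (M : ℝ) (hJlip : ∀ u v, |Real.log (J u) - Real.log (J v)| ≤ M * dTheta θ u v)
    (hJnorm : ∀ x, ∑ a : Fin d, J (cons a x) = 1) :
    ∀ δ : ℝ, 0 < δ →
      ∃ (T : ℕ) (a : ℝ), 0 < a ∧
        ∀ k : ℕ, T ≤ k → ∀ x y : ℕ → Fin d,
          ∃ Γ : Measure ((ℕ → Fin d) × (ℕ → Fin d)),
            Γ.map Prod.fst = (dualRuelle J)^[k] (Measure.dirac x) ∧
            Γ.map Prod.snd = (dualRuelle J)^[k] (Measure.dirac y) ∧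
            a ≤ (Γ {p | dTheta θ p.1 p.2 ≤ δ}).toReal := by
  intro δ hδ
  rcases Nat.eq_zero_or_pos d with hd | hd
  · subst hd
    exact ⟨0, 1, one_pos, fun k _ x _ => (x 0).elim0⟩
  -- a base point
  set x₀ : ℕ → Fin d := fun _ => ⟨0, hd⟩ with hx₀
  set M₀ : ℝ := max M 0 with hM₀
  -- uniform Lipschitz bound on the metric ball of radius θ^n
  have hlipn : ∀ n : ℕ, ∀ u v : ℕ → Fin d, (∀ i < n, u i = v i) →
      |Real.log (J u) - Real.log (J v)| ≤ M₀ * θ ^ n := by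
    intro n u v h
    refine (hJlip u v).trans ?_
    have h1 : dTheta θ u v ≤ θ ^ n := dTheta_le_pow hθ0 hθ1 h
    have h2 : 0 ≤ dTheta θ u v := dTheta_nonneg hθ0 u v
    calc M * dTheta θ u v ≤ M₀ * dTheta θ u v :=
          mul_le_mul_of_nonneg_right (le_max_left _ _) h2
      _ ≤ M₀ * θ ^ n := mul_le_mul_of_nonneg_left h1 (le_max_right _ _)
  -- uniform positive lower bound on J
  set m : ℝ := J x₀ * Real.exp (-M₀) with hmdef
  have hm0 : 0 < m := mul_pos (hJpos x₀) (Real.exp_pos _)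
  have hm : ∀ u, m ≤ J u := by
    intro u
    have h := hlipn 0 x₀ u (by omega)
    rw [pow_zero, mul_one] at h
    have h2 : Real.log (J x₀) - M₀ ≤ Real.log (J u) := by
      have := abs_le.mp h
      linarith [this.1]
    calc m = Real.exp (Real.log (J x₀) - M₀) := by
          rw [hmdef, Real.exp_sub, Real.exp_log (hJpos x₀), Real.exp_neg, div_eq_mul_inv]
      _ ≤ Real.exp (Real.log (J u)) := Real.exp_le_exp.mpr h2
      _ = J u := Real.exp_log (hJpos u)
  -- J is continuous, hence measurable
  have hJcont : Continuous J := by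
    have hlog : Continuous fun x => Real.log (J x) := by
      rw [continuous_iff_continuousAt]
      intro x
      rw [ContinuousAt, Metric.tendsto_nhds]
      intro ε hε
      obtain ⟨n, hn⟩ : ∃ n : ℕ, (M₀ + 1) * θ ^ n < ε := by
        have hM₀1 : 0 < M₀ + 1 := by positivity
        obtain ⟨n, hn⟩ := exists_pow_lt_of_lt_one (div_pos hε hM₀1) hθ1
        exact ⟨n, by rw [mul_comm]; exact (lt_div_iff₀ hM₀1).mp hn⟩
      filter_upwards [(isOpen_cyl n x).mem_nhds (fun i _ => rfl)] with y hy
      rw [Real.dist_eq]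
      calc |Real.log (J y) - Real.log (J x)| ≤ M₀ * θ ^ n := hlipn n y x hy
        _ < (M₀ + 1) * θ ^ n := by
            have : (0:ℝ) < θ ^ n := by positivity
            nlinarith
        _ < ε := hn
    have hJ : J = fun x => Real.exp (Real.log (J x)) :=
      funext fun x => (Real.exp_log (hJpos x)).symm
    rw [hJ]
    exact Real.continuous_exp.comp hlog
  have hJm : Measurable J := hJcont.measurable
  -- choose N with θ^N ≤ δ
  obtain ⟨N, hN⟩ := exists_pow_lt_of_lt_one hδ hθ1
  refine ⟨N, m ^ N, pow_pos hm0 N, fun k hk x y => ?_⟩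
  set μ := (dualRuelle J)^[k] (Measure.dirac x) with hμ
  set ν := (dualRuelle J)^[k] (Measure.dirac y) with hνdef
  haveI hμP : IsProbabilityMeasure μ :=
    ⟨iterate_mass hJm (fun z => (hJpos z).le) hJnorm k x⟩
  haveI hνP : IsProbabilityMeasure ν :=
    ⟨iterate_mass hJm (fun z => (hJpos z).le) hJnorm k y⟩
  refine ⟨μ.prod ν, by simp, by simp, ?_⟩
  -- extend a word of length N to a point of Ω
  set ext : (Fin N → Fin d) → (ℕ → Fin d) :=
    fun w i => if h : i < N then w ⟨i, h⟩ else ⟨0, hd⟩ with hext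
  have hext_eq : ∀ (w : Fin N → Fin d) (i : Fin N), ext w i = w i := by
    intro w i; simp [hext, i.isLt]
  -- the diagonal union of cylinders
  set U : Set ((ℕ → Fin d) × (ℕ → Fin d)) :=
    ⋃ w : Fin N → Fin d, (cyl N (ext w)) ×ˢ (cyl N (ext w)) with hU
  have hUsub : U ⊆ {p | dTheta θ p.1 p.2 ≤ δ} := by
    rintro ⟨p, q⟩ hp
    obtain ⟨w, hw⟩ := Set.mem_iUnion.mp hp
    have h1 : ∀ i < N, p i = q i := fun i hi =>
      (hw.1 i hi).trans (hw.2 i hi).symm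
    exact le_trans (dTheta_le_pow hθ0 hθ1 h1) hN.le
  have hdisj : Pairwise fun w v : Fin N → Fin d =>
      Disjoint ((cyl N (ext w)) ×ˢ (cyl N (ext w))) ((cyl N (ext v)) ×ˢ (cyl N (ext v))) := by
    intro w v hwv
    obtain ⟨i, hi⟩ := Function.ne_iff.mp hwv
    refine Set.disjoint_left.mpr fun p hp hq => hi ?_
    have h1 : p.1 i = ext w i := hp.1 i i.isLt
    have h2 : p.1 i = ext v i := hq.1 i i.isLt
    rw [← hext_eq w i, ← hext_eq v i, ← h1, ← h2]
  have hUΓ : (μ.prod ν) U = ∑ w : Fin N → Fin d, μ (cyl N (ext w)) * ν (cyl N (ext w)) := by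
    rw [hU, measure_iUnion hdisj
      (fun w => (measurableSet_cyl _ _).prod (measurableSet_cyl _ _)), tsum_fintype]
    simp [Measure.prod_prod]
  have hcover : ⋃ w : Fin N → Fin d, cyl N (ext w) = (Set.univ : Set (ℕ → Fin d)) := by
    refine Set.eq_univ_of_forall fun z => Set.mem_iUnion.mpr ⟨fun i => z i, ?_⟩
    intro i hi
    simp [hext, hi]
  have hdisj' : Pairwise fun w v : Fin N → Fin d =>
      Disjoint (cyl N (ext w)) (cyl N (ext v)) := by
    intro w v hwv
    obtain ⟨i, hi⟩ := Function.ne_iff.mp hwv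
    refine Set.disjoint_left.mpr fun p hp hq => hi ?_
    rw [← hext_eq w i, ← hext_eq v i, ← hp i i.isLt, ← hq i i.isLt]
  have hsum1 : ∑ w : Fin N → Fin d, μ (cyl N (ext w)) = 1 := by
    rw [← tsum_fintype (L := SummationFilter.unconditional _), ← measure_iUnion hdisj' (fun w => measurableSet_cyl _ _), hcover,
      measure_univ]
  have hlow : ENNReal.ofReal m ^ N ≤ (μ.prod ν) {p | dTheta θ p.1 p.2 ≤ δ} := by
    calc ENNReal.ofReal m ^ N
        = (∑ w : Fin N → Fin d, μ (cyl N (ext w))) * ENNReal.ofReal m ^ N := by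
          rw [hsum1, one_mul]
      _ = ∑ w : Fin N → Fin d, μ (cyl N (ext w)) * ENNReal.ofReal m ^ N := by
          rw [Finset.sum_mul]
      _ ≤ ∑ w : Fin N → Fin d, μ (cyl N (ext w)) * ν (cyl N (ext w)) :=
          Finset.sum_le_sum fun w _ => mul_le_mul_right
            (iterate_cyl_lb hJm hJnorm hm0.le hm N k hk y (ext w)) _
      _ = (μ.prod ν) U := hUΓ.symm
      _ ≤ _ := measure_mono hUsub
  have hfin : (μ.prod ν) {p | dTheta θ p.1 p.2 ≤ δ} ≠ ⊤ := measure_ne_top _ _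
  have := ENNReal.toReal_mono hfin hlow
  rwa [ENNReal.toReal_pow, ENNReal.toReal_ofReal hm0.le] at this
end

section
/- Fix θ ∈ (0,1), let d_θ be the standard metric on Ω = {1,...,d}^ℕ, and let log J : Ω → ℝ be Lipschitz with respect to d_θ and normalized (∑_{a=1}^d J(a⌢x) = 1 for all x). Then there exist δ > 0, t ∈ ℕ with t ≥ 1, and α ∈ (0,1) such that, with the equivalent metric d(x,y) = min{1, δ⁻¹ d_θ(x,y)}, the t-th iterate of the dual Ruelle operator is an α-contraction in the 1-Wasserstein distance: for all Borel probability measures μ₁, μ₂ on Ω, W₁((ℒ*)ᵗ(μ₁), (ℒ*)ᵗ(μ₂)) ≤ α · W₁(μ₁, μ₂), where W₁(μ,ν) = inf over couplings Γ of μ and ν of ∫ d(x,y) dΓ(x,y). -/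
open MeasureTheory Finset

/-- The optimal transport cost (for the cost `c`) between two measures on `Ω`:
the infimum over couplings `Γ` of `∫ c dΓ`.  For `c` a metric `d` this is the
`1`-Wasserstein distance `W₁`. -/
noncomputable def Wcost {d : ℕ} (c : ((ℕ → Fin d) × (ℕ → Fin d)) → ℝ)
    (μ ν : Measure (ℕ → Fin d)) : ℝ :=
  sInf {r : ℝ | ∃ Γ : Measure ((ℕ → Fin d) × (ℕ → Fin d)),
    Γ.map Prod.fst = μ ∧ Γ.map Prod.snd = ν ∧ r = ∫ p, c p ∂Γ}

set_option linter.unusedSectionVars false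
set_option linter.unusedVariables false

namespace RuelleAux

variable {d : ℕ}

def app (t : ℕ) (w : Fin t → Fin d) (x : ℕ → Fin d) : ℕ → Fin d :=
  fun n => if h : n < t then w ⟨n, h⟩ else x (n - t)

lemma app_zero (w : Fin 0 → Fin d) (x : ℕ → Fin d) : app 0 w x = x := by
  funext n; simp [app]

lemma cons_zero (a : Fin d) (x : ℕ → Fin d) : cons a x 0 = a := rfl

lemma cons_succ (a : Fin d) (x : ℕ → Fin d) (m : ℕ) : cons a x (m+1) = x m := rfl

lemma app_succ (t : ℕ) (w : Fin (t+1) → Fin d) (x : ℕ → Fin d) :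
    app (t+1) w x = cons (w 0) (app t (Fin.tail w) x) := by
  funext n
  match n with
  | 0 => simp [app, cons_zero]
  | Nat.succ m =>
    rw [cons_succ]
    simp only [app, Fin.tail]
    by_cases h : m < t
    · rw [dif_pos (by omega : m + 1 < t + 1), dif_pos h]
      rfl
    · rw [dif_neg (by omega : ¬ (m + 1 < t + 1)), dif_neg h]
      congr 1
      omega

lemma cons_inj {a : Fin d} {x y : ℕ → Fin d} (h : cons a x = cons a y) : x = y := by
  funext n
  have := congrFun h (n+1)
  simpa [cons_succ] using this

lemma dTheta_self (θ : ℝ) (x : ℕ → Fin d) : dTheta θ x x = 0 := by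
  simp [dTheta]

lemma dTheta_nonneg {θ : ℝ} (hθ : 0 ≤ θ) (x y : ℕ → Fin d) : 0 ≤ dTheta θ x y := by
  unfold dTheta
  split
  · exact le_refl 0
  · exact pow_nonneg hθ _

lemma dTheta_le_one {θ : ℝ} (hθ0 : 0 ≤ θ) (hθ1 : θ ≤ 1) (x y : ℕ → Fin d) :
    dTheta θ x y ≤ 1 := by
  unfold dTheta
  split
  · norm_num
  · exact pow_le_one₀ hθ0 hθ1

lemma dTheta_cons (θ : ℝ) (a : Fin d) (x y : ℕ → Fin d) :
    dTheta θ (cons a x) (cons a y) = θ * dTheta θ x y := by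
  by_cases h : x = y
  · subst h; rw [dTheta_self, dTheta_self, mul_zero]
  · have h' : cons a x ≠ cons a y := fun hc => h (cons_inj hc)
    unfold dTheta
    rw [dif_neg h, dif_neg h']
    have hN := Nat.find_spec (Function.ne_iff.mp h)
    have key : Nat.find (Function.ne_iff.mp h') = Nat.find (Function.ne_iff.mp h) + 1 := by
      rw [Nat.find_eq_iff]
      constructor
      · simpa [cons_succ] using hN
      · intro m hm
        match m with
        | 0 => simp [cons_zero]
        | Nat.succ k =>
          have : ¬ x k ≠ y k := Nat.find_min (Function.ne_iff.mp h) (by omega)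
          simpa [cons_succ] using this
    rw [key, pow_succ']

lemma dTheta_app (θ : ℝ) (t : ℕ) (w : Fin t → Fin d) (x y : ℕ → Fin d) :
    dTheta θ (app t w x) (app t w y) = θ ^ t * dTheta θ x y := by
  induction t with
  | zero => rw [app_zero, app_zero, pow_zero, one_mul]
  | succ t ih =>
    rw [app_succ, app_succ, dTheta_cons, ih, pow_succ]
    ring

lemma measurable_app (t : ℕ) (w : Fin t → Fin d) : Measurable (app t w) := by
  apply measurable_pi_lambda
  intro n
  unfold app
  split
  · exact measurable_const
  · exact measurable_pi_apply _

lemma measurable_dTheta {θ : ℝ} (hθ : 0 ≤ θ) :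
    Measurable (fun p : (ℕ → Fin d) × (ℕ → Fin d) => dTheta θ p.1 p.2) := by
  classical
  set A : ℕ → Set ((ℕ → Fin d) × (ℕ → Fin d)) :=
    fun n => {p | (∀ i, i < n → p.1 i = p.2 i) ∧ p.1 n ≠ p.2 n} with hA
  have hAmeas : ∀ n, MeasurableSet (A n) := by
    intro n
    have h1 : ∀ i, MeasurableSet {p : (ℕ → Fin d) × (ℕ → Fin d) | p.1 i = p.2 i} :=
      fun i => measurableSet_eq_fun (measurable_fst.eval) (measurable_snd.eval)
    have : A n = (⋂ i, ⋂ _ : i < n, {p : (ℕ → Fin d) × (ℕ → Fin d) | p.1 i = p.2 i}) ∩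
        {p : (ℕ → Fin d) × (ℕ → Fin d) | p.1 n = p.2 n}ᶜ := by
      ext p; simp [hA]
    rw [this]
    exact (MeasurableSet.iInter fun i => MeasurableSet.iInter fun _ => h1 i).inter (h1 n).compl
  set g : ((ℕ → Fin d) × (ℕ → Fin d)) → ENNReal :=
    fun p => ∑' n, Set.indicator (A n) (fun _ => ENNReal.ofReal (θ ^ n)) p with hg
  have hgmeas : Measurable g := by
    apply Measurable.ennreal_tsum
    intro n
    exact measurable_const.indicator (hAmeas n)
  have key : (fun p : (ℕ → Fin d) × (ℕ → Fin d) => dTheta θ p.1 p.2) =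
      fun p => (g p).toReal := by
    funext p
    by_cases h : p.1 = p.2
    · have : g p = 0 := by
        rw [hg]
        have : ∀ n, Set.indicator (A n) (fun _ => ENNReal.ofReal (θ ^ n)) p = 0 := by
          intro n
          apply Set.indicator_of_notMem
          intro hmem
          exact hmem.2 (congrFun h n)
        simp only [this, tsum_zero]
      rw [this]
      simp [dTheta, h]
    · have hex := Function.ne_iff.mp h
      set N := Nat.find hex with hN
      have hgp : g p = ENNReal.ofReal (θ ^ N) := by
        have h0 : ∀ m, m ≠ N →
            Set.indicator (A m) (fun _ => ENNReal.ofReal (θ ^ m)) p = 0 := by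
          intro m hm
          apply Set.indicator_of_notMem
          intro hmem
          rcases lt_or_gt_of_ne hm with hlt | hgt
          · exact (Nat.find_min hex hlt) hmem.2
          · exact (Nat.find_spec hex) (hmem.1 N hgt)
        have hmem : p ∈ A N := by
          refine ⟨fun i hi => ?_, Nat.find_spec hex⟩
          by_contra hne
          exact absurd hi (not_lt.mpr (Nat.find_le hne))
        calc g p = Set.indicator (A N) (fun _ => ENNReal.ofReal (θ ^ N)) p :=
              tsum_eq_single N h0
          _ = ENNReal.ofReal (θ ^ N) := Set.indicator_of_mem hmem _
      rw [hgp, ENNReal.toReal_ofReal (pow_nonneg hθ N)]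
      simp only [dTheta, dif_neg h]
      congr 1
  rw [key]
  exact hgmeas.ennreal_toReal


lemma measurable_of_lip {θ M : ℝ} (hθ0 : 0 ≤ θ) (hθ1 : θ < 1) (hM : 0 ≤ M)
    {F : (ℕ → Fin d) → ℝ} (hF : ∀ u v, |F u - F v| ≤ M * dTheta θ u v) :
    Measurable F := by
  have hcont : Continuous F := by
    rw [continuous_iff_continuousAt]
    intro x
    rw [ContinuousAt, Metric.tendsto_nhds]
    intro ε hε
    obtain ⟨n, hn⟩ := (((tendsto_pow_atTop_nhds_zero_of_lt_one hθ0 hθ1).const_mul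
      M).eventually (gt_mem_nhds (show M * 0 < ε by simpa using hε))).exists
    have hV : (⋂ i ∈ Finset.range n, {y : ℕ → Fin d | y i = x i}) ∈ nhds x := by
      apply IsOpen.mem_nhds
      · apply isOpen_biInter_finset
        intro i _
        exact IsOpen.preimage (continuous_apply (A := fun _ : ℕ => Fin d) i)
          (isOpen_discrete {x i})
      · simp
    filter_upwards [hV] with y hy
    have hd : dTheta θ y x ≤ θ ^ n := by
      by_cases h : y = x
      · rw [h, dTheta_self]; exact pow_nonneg hθ0 n
      · have hex := Function.ne_iff.mp h
        simp only [dTheta, dif_neg h]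
        apply pow_le_pow_of_le_one hθ0 hθ1.le
        by_contra hlt
        push_neg at hlt
        have : y (Nat.find hex) = x (Nat.find hex) := by
          simp only [Set.mem_iInter] at hy
          exact hy _ (Finset.mem_range.mpr hlt)
        exact (Nat.find_spec hex) this
    calc dist (F y) (F x) = |F y - F x| := Real.dist_eq _ _
      _ ≤ M * dTheta θ y x := hF y x
      _ ≤ M * θ ^ n := by apply mul_le_mul_of_nonneg_left hd hM
      _ < ε := hn
  exact hcont.measurable

noncomputable def wt (J : (ℕ → Fin d) → ℝ) : (t : ℕ) → (Fin t → Fin d) → (ℕ → Fin d) → ℝ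
  | 0, _, _ => 1
  | t+1, w, x => wt J t (Fin.tail w) x * J (app (t+1) w x)

lemma wt_pos {J : (ℕ → Fin d) → ℝ} (hJ : ∀ x, 0 < J x) (t : ℕ) (w : Fin t → Fin d)
    (x : ℕ → Fin d) : 0 < wt J t w x := by
  induction t with
  | zero => exact one_pos
  | succ t ih => exact mul_pos (ih _) (hJ _)

lemma measurable_wt {J : (ℕ → Fin d) → ℝ} (hJ : Measurable J) (t : ℕ) (w : Fin t → Fin d) :
    Measurable (wt J t w) := by
  induction t with
  | zero => exact measurable_const
  | succ t ih => exact (ih _).mul (hJ.comp (measurable_app _ _))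

lemma app_cons (t : ℕ) (a : Fin d) (w : Fin t → Fin d) (x : ℕ → Fin d) :
    app (t+1) (Fin.cons a w) x = cons a (app t w x) := by
  rw [app_succ, Fin.cons_zero, Fin.tail_cons]

lemma wt_cons {J : (ℕ → Fin d) → ℝ} (t : ℕ) (a : Fin d) (w : Fin t → Fin d) (x : ℕ → Fin d) :
    wt J (t+1) (Fin.cons a w) x = wt J t w x * J (cons a (app t w x)) := by
  have h : wt J (t+1) (Fin.cons a w) x =
      wt J t (Fin.tail (α := fun _ : Fin (t+1) => Fin d) (Fin.cons a w)) x *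
        J (app (t+1) (Fin.cons a w) x) := rfl
  rw [h, Fin.tail_cons, app_cons]

lemma sum_fn_succ {t : ℕ} (F : (Fin (t+1) → Fin d) → ℝ) :
    ∑ u : Fin (t+1) → Fin d, F u = ∑ a : Fin d, ∑ w : Fin t → Fin d, F (Fin.cons a w) := by
  rw [← (Fin.consEquiv (fun _ : Fin (t+1) => Fin d)).sum_comp F, Fintype.sum_prod_type]
  rfl

lemma wt_sum_one {J : (ℕ → Fin d) → ℝ} (hJnorm : ∀ x, ∑ a : Fin d, J (cons a x) = 1)
    (t : ℕ) (x : ℕ → Fin d) : ∑ w : Fin t → Fin d, wt J t w x = 1 := by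
  induction t with
  | zero =>
    simp [wt]
  | succ t ih =>
    rw [sum_fn_succ]
    rw [Finset.sum_comm]
    calc ∑ w : Fin t → Fin d, ∑ a : Fin d, wt J (t+1) (Fin.cons a w) x
        = ∑ w : Fin t → Fin d, wt J t w x * ∑ a : Fin d, J (cons a (app t w x)) := by
          apply Finset.sum_congr rfl
          intro w _
          rw [Finset.mul_sum]
          apply Finset.sum_congr rfl
          intro a _
          rw [wt_cons]
      _ = 1 := by
          simp only [hJnorm, mul_one]
          exact ih

lemma abs_log_wt {θ M : ℝ} {J : (ℕ → Fin d) → ℝ} (hθ0 : 0 ≤ θ) (hM : 0 ≤ M)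
    (hJpos : ∀ x, 0 < J x)
    (hJlip : ∀ u v, |Real.log (J u) - Real.log (J v)| ≤ M * dTheta θ u v)
    (t : ℕ) (w : Fin t → Fin d) (x y : ℕ → Fin d) :
    |Real.log (wt J t w x) - Real.log (wt J t w y)| ≤
      (M * ∑ k ∈ Finset.range t, θ ^ (k+1)) * dTheta θ x y := by
  induction t with
  | zero => simp [wt]
  | succ t ih =>
    have hx := wt_pos hJpos t (Fin.tail w) x
    have hy := wt_pos hJpos t (Fin.tail w) y
    show |Real.log (wt J t (Fin.tail w) x * J (app (t+1) w x)) -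
      Real.log (wt J t (Fin.tail w) y * J (app (t+1) w y))| ≤ _
    rw [Real.log_mul (ne_of_gt hx) (ne_of_gt (hJpos _)),
        Real.log_mul (ne_of_gt hy) (ne_of_gt (hJpos _))]
    have h1 := ih (Fin.tail w)
    have h2 := hJlip (app (t+1) w x) (app (t+1) w y)
    rw [dTheta_app] at h2
    rw [Finset.sum_range_succ]
    have habs : |Real.log (wt J t (Fin.tail w) x) + Real.log (J (app (t+1) w x)) -
        (Real.log (wt J t (Fin.tail w) y) + Real.log (J (app (t+1) w y)))| ≤
        |Real.log (wt J t (Fin.tail w) x) - Real.log (wt J t (Fin.tail w) y)| +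
        |Real.log (J (app (t+1) w x)) - Real.log (J (app (t+1) w y))| := by
      rw [show Real.log (wt J t (Fin.tail w) x) + Real.log (J (app (t+1) w x)) -
        (Real.log (wt J t (Fin.tail w) y) + Real.log (J (app (t+1) w y))) =
        (Real.log (wt J t (Fin.tail w) x) - Real.log (wt J t (Fin.tail w) y)) +
        (Real.log (J (app (t+1) w x)) - Real.log (J (app (t+1) w y))) by ring]
      exact abs_add_le _ _
    calc _ ≤ _ := habs
      _ ≤ (M * ∑ k ∈ Finset.range t, θ ^ (k+1)) * dTheta θ x y +
          M * (θ ^ (t+1) * dTheta θ x y) := add_le_add h1 h2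
      _ = (M * (∑ k ∈ Finset.range t, θ ^ (k+1) + θ ^ (t+1))) * dTheta θ x y := by ring

lemma wt_ratio {θ M : ℝ} {J : (ℕ → Fin d) → ℝ} (hθ0 : 0 ≤ θ) (hM : 0 ≤ M)
    (hJpos : ∀ x, 0 < J x)
    (hJlip : ∀ u v, |Real.log (J u) - Real.log (J v)| ≤ M * dTheta θ u v)
    (t : ℕ) (w : Fin t → Fin d) (x y : ℕ → Fin d) :
    Real.exp (-((M * ∑ k ∈ Finset.range t, θ ^ (k+1)) * dTheta θ x y)) * wt J t w y ≤
      wt J t w x := by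
  have h := abs_log_wt hθ0 hM hJpos hJlip t w x y
  rw [abs_le] at h
  have h1 : Real.log (wt J t w y) - (M * ∑ k ∈ Finset.range t, θ ^ (k+1)) * dTheta θ x y ≤
      Real.log (wt J t w x) := by linarith [h.1]
  calc Real.exp (-((M * ∑ k ∈ Finset.range t, θ ^ (k+1)) * dTheta θ x y)) * wt J t w y
      = Real.exp (Real.log (wt J t w y) - (M * ∑ k ∈ Finset.range t, θ ^ (k+1)) * dTheta θ x y) := by
        rw [sub_eq_add_neg, Real.exp_add, Real.exp_log (wt_pos hJpos t w y), mul_comm]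
    _ ≤ Real.exp (Real.log (wt J t w x)) := Real.exp_le_exp.mpr h1
    _ = wt J t w x := Real.exp_log (wt_pos hJpos t w x)


lemma measurable_cons (a : Fin d) : Measurable (cons a : (ℕ → Fin d) → (ℕ → Fin d)) := by
  apply measurable_pi_lambda
  intro n
  match n with
  | 0 => exact measurable_const
  | m + 1 => exact measurable_pi_apply m
/-- The `t`-step kernel `ℒ*ᵗ δ_x` written explicitly. -/
noncomputable def ker (J : (ℕ → Fin d) → ℝ) (t : ℕ) (x : ℕ → Fin d) :
    Measure (ℕ → Fin d) :=
  ∑ w : Fin t → Fin d, ENNReal.ofReal (wt J t w x) • Measure.dirac (app t w x)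

lemma lintegral_sum_smul_dirac {α : Type*} [MeasurableSpace α] {ι : Type*} [Fintype ι]
    (c : ι → ENNReal) (p : ι → α) {f : α → ENNReal} (hf : Measurable f) :
    ∫⁻ z, f z ∂(∑ i : ι, c i • Measure.dirac (p i)) = ∑ i : ι, c i * f (p i) := by
  rw [lintegral_finset_sum_measure]
  apply Finset.sum_congr rfl
  intro i _
  rw [lintegral_smul_measure, lintegral_dirac' _ hf, smul_eq_mul]

lemma lintegral_ker {J : (ℕ → Fin d) → ℝ} (hJ : Measurable J) (t : ℕ) (x : ℕ → Fin d)
    {f : (ℕ → Fin d) → ENNReal} (hf : Measurable f) :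
    ∫⁻ z, f z ∂(ker J t x) = ∑ w : Fin t → Fin d, ENNReal.ofReal (wt J t w x) * f (app t w x) :=
  lintegral_sum_smul_dirac _ _ hf

lemma ker_apply {J : (ℕ → Fin d) → ℝ} (t : ℕ) (x : ℕ → Fin d) {s : Set (ℕ → Fin d)}
    (hs : MeasurableSet s) :
    ker J t x s = ∑ w : Fin t → Fin d, ENNReal.ofReal (wt J t w x) * s.indicator 1 (app t w x) := by
  rw [ker]
  rw [Measure.coe_finset_sum]
  rw [Finset.sum_apply]
  apply Finset.sum_congr rfl
  intro w _
  rw [Measure.smul_apply, Measure.dirac_apply' _ hs, smul_eq_mul]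

lemma measurable_ker {J : (ℕ → Fin d) → ℝ} (hJ : Measurable J) (t : ℕ) :
    Measurable (ker J t) := by
  apply Measure.measurable_of_measurable_coe
  intro s hs
  have : (fun x => ker J t x s) = fun x =>
      ∑ w : Fin t → Fin d, ENNReal.ofReal (wt J t w x) * s.indicator 1 (app t w x) := by
    funext x; exact ker_apply t x hs
  rw [this]
  apply Finset.measurable_sum
  intro w _
  exact ((ENNReal.measurable_ofReal.comp (measurable_wt hJ t w)).mul
    ((measurable_one.indicator hs).comp (measurable_app t w)))

lemma measurable_kerOne {J : (ℕ → Fin d) → ℝ} (hJ : Measurable J) :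
    Measurable (fun x : ℕ → Fin d =>
      ∑ a : Fin d, ENNReal.ofReal (J (cons a x)) • Measure.dirac (cons a x)) := by
  apply Measure.measurable_of_measurable_coe
  intro s hs
  have : (fun x : ℕ → Fin d =>
      (∑ a : Fin d, ENNReal.ofReal (J (cons a x)) • Measure.dirac (cons a x)) s) = fun x =>
      ∑ a : Fin d, ENNReal.ofReal (J (cons a x)) * s.indicator 1 (cons a x) := by
    funext x
    rw [Measure.coe_finset_sum, Finset.sum_apply]
    apply Finset.sum_congr rfl
    intro a _
    rw [Measure.smul_apply, Measure.dirac_apply' _ hs, smul_eq_mul]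
  rw [this]
  apply Finset.measurable_sum
  intro a _
  exact ((ENNReal.measurable_ofReal.comp (hJ.comp (measurable_cons a))).mul
    ((measurable_one.indicator hs).comp (measurable_cons a)))

lemma ker_zero (J : (ℕ → Fin d) → ℝ) (x : ℕ → Fin d) : ker J 0 x = Measure.dirac x := by
  rw [ker]
  rw [Fintype.sum_unique (fun w : Fin 0 → Fin d =>
    ENNReal.ofReal (wt J 0 w x) • Measure.dirac (app 0 w x))]
  show ENNReal.ofReal (1 : ℝ) • Measure.dirac (app 0 default x) = _
  rw [app_zero, ENNReal.ofReal_one, one_smul]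

lemma ker_succ {J : (ℕ → Fin d) → ℝ} (hJ : Measurable J) (hJpos : ∀ x, 0 < J x) (t : ℕ)
    (x : ℕ → Fin d) :
    (ker J t x).bind (fun z => ∑ a : Fin d, ENNReal.ofReal (J (cons a z)) • Measure.dirac (cons a z)) =
      ker J (t+1) x := by
  ext s hs
  rw [Measure.bind_apply hs (measurable_kerOne hJ).aemeasurable]
  have hmeas : Measurable (fun z : ℕ → Fin d =>
      (∑ a : Fin d, ENNReal.ofReal (J (cons a z)) • Measure.dirac (cons a z)) s) :=
    (Measure.measurable_coe hs).comp (measurable_kerOne hJ)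
  rw [lintegral_ker hJ t x hmeas]
  rw [ker_apply _ _ hs]
  have hrhs : ∑ u : Fin (t+1) → Fin d, (ENNReal.ofReal (wt J (t+1) u x) *
        s.indicator 1 (app (t+1) u x)).toReal = 0 → True := fun _ => trivial
  -- reindex RHS
  rw [show (∑ u : Fin (t+1) → Fin d, ENNReal.ofReal (wt J (t+1) u x) *
      s.indicator 1 (app (t+1) u x)) =
      ∑ a : Fin d, ∑ w : Fin t → Fin d, ENNReal.ofReal (wt J (t+1) (Fin.cons a w) x) *
        s.indicator 1 (app (t+1) (Fin.cons a w) x) from by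
    rw [← (Fin.consEquiv (fun _ : Fin (t+1) => Fin d)).sum_comp, Fintype.sum_prod_type]; rfl]
  rw [Finset.sum_comm]
  apply Finset.sum_congr rfl
  intro w _
  have : (∑ a : Fin d, ENNReal.ofReal (J (cons a (app t w x))) •
      Measure.dirac (cons a (app t w x))) s =
      ∑ a : Fin d, ENNReal.ofReal (J (cons a (app t w x))) * s.indicator 1 (cons a (app t w x)) := by
    rw [Measure.coe_finset_sum, Finset.sum_apply]
    apply Finset.sum_congr rfl
    intro a _
    rw [Measure.smul_apply, Measure.dirac_apply' _ hs, smul_eq_mul]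
  rw [this, Finset.mul_sum]
  apply Finset.sum_congr rfl
  intro a _
  rw [wt_cons, app_cons, ENNReal.ofReal_mul (le_of_lt (wt_pos hJpos t w x)), mul_assoc]

lemma iterate_eq_bind {J : (ℕ → Fin d) → ℝ} (hJ : Measurable J) (hJpos : ∀ x, 0 < J x)
    (t : ℕ) (μ : Measure (ℕ → Fin d)) :
    (dualRuelle J)^[t] μ = μ.bind (ker J t) := by
  induction t with
  | zero =>
    simp only [Function.iterate_zero, id_eq]
    have : ker J 0 = Measure.dirac := funext (ker_zero J)
    rw [this, Measure.bind_dirac]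
  | succ t ih =>
    rw [Function.iterate_succ_apply', ih, dualRuelle,
      Measure.bind_bind (measurable_ker hJ t).aemeasurable (measurable_kerOne hJ).aemeasurable]
    congr 1
    funext x
    exact ker_succ hJ hJpos t x
section Coupling
variable (J : (ℕ → Fin d) → ℝ) (t : ℕ)

/-- minimum weight -/
noncomputable def mw (p : (ℕ → Fin d) × (ℕ → Fin d)) (w : Fin t → Fin d) : ℝ :=
  min (wt J t w p.1) (wt J t w p.2)

noncomputable def ew (p : (ℕ → Fin d) × (ℕ → Fin d)) (w : Fin t → Fin d) : ℝ :=
  wt J t w p.1 - mw J t p w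

noncomputable def fw (p : (ℕ → Fin d) × (ℕ → Fin d)) (w : Fin t → Fin d) : ℝ :=
  wt J t w p.2 - mw J t p w

noncomputable def RR (p : (ℕ → Fin d) × (ℕ → Fin d)) : ℝ := ∑ w : Fin t → Fin d, ew J t p w

/-- The explicit coupling of `ker J t p.1` and `ker J t p.2`. -/
noncomputable def coup (p : (ℕ → Fin d) × (ℕ → Fin d)) :
    Measure ((ℕ → Fin d) × (ℕ → Fin d)) :=
  (∑ w : Fin t → Fin d, ENNReal.ofReal (mw J t p w) •
      Measure.dirac (app t w p.1, app t w p.2)) +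
  ∑ pr : (Fin t → Fin d) × (Fin t → Fin d),
    ENNReal.ofReal (ew J t p pr.1 * fw J t p pr.2 / RR J t p) •
      Measure.dirac (app t pr.1 p.1, app t pr.2 p.2)

variable {J t}
variable (hJpos : ∀ x, 0 < J x) (hJnorm : ∀ x, ∑ a : Fin d, J (cons a x) = 1)

section
include hJpos

lemma mw_nonneg (p) (w : Fin t → Fin d) : 0 ≤ mw J t p w :=
  le_min (wt_pos hJpos t w p.1).le (wt_pos hJpos t w p.2).le

lemma ew_nonneg (p) (w : Fin t → Fin d) : 0 ≤ ew J t p w :=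
  sub_nonneg.mpr (min_le_left _ _)

lemma fw_nonneg (p) (w : Fin t → Fin d) : 0 ≤ fw J t p w :=
  sub_nonneg.mpr (min_le_right _ _)

lemma RR_nonneg (p) : 0 ≤ RR J t p :=
  Finset.sum_nonneg fun w _ => ew_nonneg hJpos p w

lemma ew_le_RR (p) (w : Fin t → Fin d) : ew J t p w ≤ RR J t p :=
  Finset.single_le_sum (fun v _ => ew_nonneg hJpos p v) (Finset.mem_univ w)

include hJnorm

lemma sum_mw_add_RR (p) : (∑ w : Fin t → Fin d, mw J t p w) + RR J t p = 1 := by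
  rw [RR, ← Finset.sum_add_distrib]
  have : ∀ w : Fin t → Fin d, mw J t p w + ew J t p w = wt J t w p.1 := by
    intro w; rw [ew]; ring
  rw [Finset.sum_congr rfl (fun w _ => this w)]
  exact wt_sum_one hJnorm t p.1

lemma sum_fw_eq_RR (p) : (∑ w : Fin t → Fin d, fw J t p w) = RR J t p := by
  have h1 : (∑ w : Fin t → Fin d, fw J t p w) + (∑ w : Fin t → Fin d, mw J t p w) = 1 := by
    rw [← Finset.sum_add_distrib]
    have : ∀ w : Fin t → Fin d, fw J t p w + mw J t p w = wt J t w p.2 := by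
      intro w; rw [fw]; ring
    rw [Finset.sum_congr rfl (fun w _ => this w)]
    exact wt_sum_one hJnorm t p.2
  have h2 := sum_mw_add_RR (t := t) hJpos hJnorm p
  linarith

lemma sum_ew_fw_div (p) (w : Fin t → Fin d) :
    ∑ w' : Fin t → Fin d, ew J t p w * fw J t p w' / RR J t p = ew J t p w := by
  rw [← Finset.sum_div, ← Finset.mul_sum, sum_fw_eq_RR hJpos hJnorm]
  by_cases hR : RR J t p = 0
  · have : ew J t p w = 0 :=
      le_antisymm (hR ▸ ew_le_RR hJpos p w) (ew_nonneg hJpos p w)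
    rw [this, hR]; simp
  · field_simp

lemma sum_fw_ew_div (p) (w' : Fin t → Fin d) :
    ∑ w : Fin t → Fin d, ew J t p w * fw J t p w' / RR J t p = fw J t p w' := by
  have : ∀ w : Fin t → Fin d, ew J t p w * fw J t p w' / RR J t p =
      fw J t p w' * ew J t p w / RR J t p := by intro w; ring_nf
  rw [Finset.sum_congr rfl (fun w _ => this w), ← Finset.sum_div, ← Finset.mul_sum, ← RR]
  by_cases hR : RR J t p = 0
  · have hfle : fw J t p w' ≤ RR J t p := by
      rw [← sum_fw_eq_RR hJpos hJnorm]
      exact Finset.single_le_sum (fun v _ => fw_nonneg hJpos p v) (Finset.mem_univ w')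
    have : fw J t p w' = 0 := le_antisymm (hR ▸ hfle) (fw_nonneg hJpos p w')
    rw [this, hR]; simp
  · field_simp

end

lemma coup_map_fst (hJ : Measurable J) (hJpos : ∀ x, 0 < J x)
    (hJnorm : ∀ x, ∑ a : Fin d, J (cons a x) = 1) (p : (ℕ → Fin d) × (ℕ → Fin d)) :
    (coup J t p).map Prod.fst = ker J t p.1 := by
  ext s hs
  rw [Measure.map_apply measurable_fst hs, ker_apply t p.1 hs, coup]
  have hps : MeasurableSet (Prod.fst ⁻¹' s : Set ((ℕ → Fin d) × (ℕ → Fin d))) :=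
    measurable_fst hs
  rw [Measure.coe_add, Pi.add_apply, Measure.coe_finset_sum, Measure.coe_finset_sum,
    Finset.sum_apply, Finset.sum_apply]
  have h1 : ∀ w : Fin t → Fin d,
      (ENNReal.ofReal (mw J t p w) • Measure.dirac (app t w p.1, app t w p.2))
        (Prod.fst ⁻¹' s) = ENNReal.ofReal (mw J t p w) * s.indicator 1 (app t w p.1) := by
    intro w
    rw [Measure.smul_apply, Measure.dirac_apply' _ hps, smul_eq_mul]
    congr 1
  have h2 : ∀ pr : (Fin t → Fin d) × (Fin t → Fin d),
      (ENNReal.ofReal (ew J t p pr.1 * fw J t p pr.2 / RR J t p) •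
        Measure.dirac (app t pr.1 p.1, app t pr.2 p.2)) (Prod.fst ⁻¹' s) =
      ENNReal.ofReal (ew J t p pr.1 * fw J t p pr.2 / RR J t p) *
        s.indicator 1 (app t pr.1 p.1) := by
    intro pr
    rw [Measure.smul_apply, Measure.dirac_apply' _ hps, smul_eq_mul]
    congr 1
  rw [Finset.sum_congr rfl (fun w _ => h1 w), Finset.sum_congr rfl (fun pr _ => h2 pr)]
  rw [Fintype.sum_prod_type]
  have h3 : ∀ w : Fin t → Fin d,
      (∑ w' : Fin t → Fin d, ENNReal.ofReal (ew J t p w * fw J t p w' / RR J t p) *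
        s.indicator 1 (app t w p.1)) = ENNReal.ofReal (ew J t p w) * s.indicator 1 (app t w p.1) := by
    intro w
    rw [← Finset.sum_mul]
    congr 1
    rw [← ENNReal.ofReal_sum_of_nonneg (fun w' _ => div_nonneg
      (mul_nonneg (ew_nonneg hJpos p w) (fw_nonneg hJpos p w')) (RR_nonneg hJpos p)),
      sum_ew_fw_div hJpos hJnorm p w]
  rw [Finset.sum_congr rfl (fun w _ => h3 w), ← Finset.sum_add_distrib]
  apply Finset.sum_congr rfl
  intro w _
  rw [← add_mul, ← ENNReal.ofReal_add (mw_nonneg hJpos p w) (ew_nonneg hJpos p w)]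
  congr 2
  rw [mw, ew, mw]; ring

lemma coup_map_snd (hJ : Measurable J) (hJpos : ∀ x, 0 < J x)
    (hJnorm : ∀ x, ∑ a : Fin d, J (cons a x) = 1) (p : (ℕ → Fin d) × (ℕ → Fin d)) :
    (coup J t p).map Prod.snd = ker J t p.2 := by
  ext s hs
  rw [Measure.map_apply measurable_snd hs, ker_apply t p.2 hs, coup]
  have hps : MeasurableSet (Prod.snd ⁻¹' s : Set ((ℕ → Fin d) × (ℕ → Fin d))) :=
    measurable_snd hs
  rw [Measure.coe_add, Pi.add_apply, Measure.coe_finset_sum, Measure.coe_finset_sum,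
    Finset.sum_apply, Finset.sum_apply]
  have h1 : ∀ w : Fin t → Fin d,
      (ENNReal.ofReal (mw J t p w) • Measure.dirac (app t w p.1, app t w p.2))
        (Prod.snd ⁻¹' s) = ENNReal.ofReal (mw J t p w) * s.indicator 1 (app t w p.2) := by
    intro w
    rw [Measure.smul_apply, Measure.dirac_apply' _ hps, smul_eq_mul]
    congr 1
  have h2 : ∀ pr : (Fin t → Fin d) × (Fin t → Fin d),
      (ENNReal.ofReal (ew J t p pr.1 * fw J t p pr.2 / RR J t p) •
        Measure.dirac (app t pr.1 p.1, app t pr.2 p.2)) (Prod.snd ⁻¹' s) =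
      ENNReal.ofReal (ew J t p pr.1 * fw J t p pr.2 / RR J t p) *
        s.indicator 1 (app t pr.2 p.2) := by
    intro pr
    rw [Measure.smul_apply, Measure.dirac_apply' _ hps, smul_eq_mul]
    congr 1
  rw [Finset.sum_congr rfl (fun w _ => h1 w), Finset.sum_congr rfl (fun pr _ => h2 pr)]
  rw [Fintype.sum_prod_type]
  rw [Finset.sum_comm]
  have h3 : ∀ w' : Fin t → Fin d,
      (∑ w : Fin t → Fin d, ENNReal.ofReal (ew J t p w * fw J t p w' / RR J t p) *
        s.indicator 1 (app t w' p.2)) = ENNReal.ofReal (fw J t p w') * s.indicator 1 (app t w' p.2) := by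
    intro w'
    rw [← Finset.sum_mul]
    congr 1
    rw [← ENNReal.ofReal_sum_of_nonneg (fun w _ => div_nonneg
      (mul_nonneg (ew_nonneg hJpos p w) (fw_nonneg hJpos p w')) (RR_nonneg hJpos p)),
      sum_fw_ew_div hJpos hJnorm p w']
  rw [Finset.sum_congr rfl (fun w' _ => h3 w'), ← Finset.sum_add_distrib]
  apply Finset.sum_congr rfl
  intro w _
  rw [← add_mul, ← ENNReal.ofReal_add (mw_nonneg hJpos p w) (fw_nonneg hJpos p w)]
  congr 2
  rw [mw, fw, mw]; ring

lemma measurable_coup (hJ : Measurable J) :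
    Measurable (coup J t (d := d)) := by
  apply Measure.measurable_of_measurable_coe
  intro s hs
  have hmw : ∀ w : Fin t → Fin d, Measurable fun p : (ℕ → Fin d) × (ℕ → Fin d) => mw J t p w :=
    fun w => ((measurable_wt hJ t w).comp measurable_fst).min
      ((measurable_wt hJ t w).comp measurable_snd)
  have hew : ∀ w : Fin t → Fin d, Measurable fun p : (ℕ → Fin d) × (ℕ → Fin d) => ew J t p w :=
    fun w => ((measurable_wt hJ t w).comp measurable_fst).sub (hmw w)
  have hfw : ∀ w : Fin t → Fin d, Measurable fun p : (ℕ → Fin d) × (ℕ → Fin d) => fw J t p w :=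
    fun w => ((measurable_wt hJ t w).comp measurable_snd).sub (hmw w)
  have hRR : Measurable fun p : (ℕ → Fin d) × (ℕ → Fin d) => RR J t p :=
    Finset.measurable_sum _ fun w _ => hew w
  have key : (fun p => coup J t p s) = fun p =>
      (∑ w : Fin t → Fin d, ENNReal.ofReal (mw J t p w) *
        s.indicator 1 (app t w p.1, app t w p.2)) +
      ∑ pr : (Fin t → Fin d) × (Fin t → Fin d),
        ENNReal.ofReal (ew J t p pr.1 * fw J t p pr.2 / RR J t p) *
          s.indicator 1 (app t pr.1 p.1, app t pr.2 p.2) := by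
    funext p
    rw [coup, Measure.coe_add, Pi.add_apply, Measure.coe_finset_sum, Measure.coe_finset_sum,
      Finset.sum_apply, Finset.sum_apply]
    congr 1
    · apply Finset.sum_congr rfl
      intro w _
      rw [Measure.smul_apply, Measure.dirac_apply' _ hs, smul_eq_mul]
    · apply Finset.sum_congr rfl
      intro pr _
      rw [Measure.smul_apply, Measure.dirac_apply' _ hs, smul_eq_mul]
  rw [key]
  apply Measurable.add
  · apply Finset.measurable_sum
    intro w _
    exact (ENNReal.measurable_ofReal.comp (hmw w)).mul
      ((measurable_one.indicator hs).comp
        (((measurable_app t w).comp measurable_fst).prodMk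
          ((measurable_app t w).comp measurable_snd)))
  · apply Finset.measurable_sum
    intro pr _
    exact (ENNReal.measurable_ofReal.comp
        ((((hew pr.1).mul (hfw pr.2)).div hRR))).mul
      ((measurable_one.indicator hs).comp
        (((measurable_app t pr.1).comp measurable_fst).prodMk
          ((measurable_app t pr.2).comp measurable_snd)))

lemma geom_aux {θ : ℝ} (hθ0 : 0 ≤ θ) (hθ1 : θ < 1) (t : ℕ) :
    ∑ k ∈ Finset.range t, θ ^ (k+1) ≤ θ / (1 - θ) := by
  have h1 : (∑ k ∈ Finset.range t, θ ^ k) * (1 - θ) = 1 - θ ^ t := by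
    linear_combination -(geom_sum_mul θ t)
  have h2 : ∑ k ∈ Finset.range t, θ ^ (k+1) = θ * ∑ k ∈ Finset.range t, θ ^ k := by
    rw [Finset.mul_sum]
    exact Finset.sum_congr rfl fun k _ => by rw [pow_succ']
  have h3 : (0:ℝ) < 1 - θ := by linarith
  have h4 : θ ^ t ≥ 0 := pow_nonneg hθ0 t
  rw [h2, le_div_iff₀ h3]
  nlinarith [mul_nonneg hθ0 h4]

lemma core_estimate {θ M : ℝ} {J : (ℕ → Fin d) → ℝ} (hθ0 : 0 < θ) (hθ1 : θ < 1)
    (hM : 0 ≤ M) (hJpos : ∀ x, 0 < J x)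
    (hJlip : ∀ u v, |Real.log (J u) - Real.log (J v)| ≤ M * dTheta θ u v)
    (hJnorm : ∀ x, ∑ a : Fin d, J (cons a x) = 1) {δ α : ℝ} (hδ : 0 < δ) (t : ℕ)
    (hα1 : δ⁻¹ * θ ^ t + (1 - Real.exp (-(M * (θ / (1 - θ))))) ≤ α)
    (hα2 : θ ^ t + δ * (M * (θ / (1 - θ))) ≤ α)
    (p : (ℕ → Fin d) × (ℕ → Fin d)) :
    ∫⁻ q, ENNReal.ofReal (min 1 (δ⁻¹ * dTheta θ q.1 q.2)) ∂(coup J t p) ≤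
      ENNReal.ofReal (α * min 1 (δ⁻¹ * dTheta θ p.1 p.2)) := by
  have hδinv : (0:ℝ) ≤ δ⁻¹ := inv_nonneg.mpr hδ.le
  have hcR : Measurable (fun q : (ℕ → Fin d) × (ℕ → Fin d) =>
      min 1 (δ⁻¹ * dTheta θ q.1 q.2)) :=
    measurable_const.min ((measurable_dTheta hθ0.le).const_mul δ⁻¹)
  have hcmeas : Measurable (fun q : (ℕ → Fin d) × (ℕ → Fin d) =>
      ENNReal.ofReal (min 1 (δ⁻¹ * dTheta θ q.1 q.2))) :=
    ENNReal.measurable_ofReal.comp hcR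
  set D := dTheta θ p.1 p.2 with hDdef
  have hD0 : 0 ≤ D := dTheta_nonneg hθ0.le _ _
  have hD1 : D ≤ 1 := dTheta_le_one hθ0.le hθ1.le _ _
  set S := ∑ k ∈ Finset.range t, θ ^ (k+1) with hSdef
  have hS0 : 0 ≤ S := Finset.sum_nonneg fun k _ => pow_nonneg hθ0.le _
  have hSK : S ≤ θ / (1 - θ) := geom_aux hθ0.le hθ1 t
  set K := M * (θ / (1 - θ)) with hKdef
  have hK0 : 0 ≤ K := mul_nonneg hM (div_nonneg hθ0.le (by linarith))
  set A := ∑ w : Fin t → Fin d, mw J t p w with hAdef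
  set B := min 1 (δ⁻¹ * (θ ^ t * D)) with hBdef
  have hB0 : 0 ≤ B := le_min one_pos.le (mul_nonneg hδinv (mul_nonneg (pow_nonneg hθ0.le t) hD0))
  have hA0 : 0 ≤ A := Finset.sum_nonneg fun w _ => mw_nonneg hJpos p w
  have hAR := sum_mw_add_RR (t := t) hJpos hJnorm p
  have hR0 := RR_nonneg hJpos (t := t) p
  have hA1 : A ≤ 1 := by rw [hAdef]; linarith [hAR]
  -- lower bound on A
  have hEK : M * S * D ≤ K := by
    calc M * S * D ≤ M * (θ / (1-θ)) * D := by
          apply mul_le_mul_of_nonneg_right (mul_le_mul_of_nonneg_left hSK hM) hD0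
      _ ≤ K * 1 := by rw [hKdef]; exact mul_le_mul_of_nonneg_left hD1 hK0
      _ = K := mul_one K
  have hAexp : Real.exp (-(M * S * D)) ≤ A := by
    have hterm : ∀ w : Fin t → Fin d,
        Real.exp (-(M * S * D)) * wt J t w p.2 ≤ mw J t p w := by
      intro w
      apply le_min
      · exact wt_ratio hθ0.le hM hJpos hJlip t w p.1 p.2
      · calc Real.exp (-(M * S * D)) * wt J t w p.2 ≤ 1 * wt J t w p.2 := by
              apply mul_le_mul_of_nonneg_right _ (wt_pos hJpos t w p.2).le
              exact Real.exp_le_one_iff.mpr (neg_nonpos.mpr (by positivity))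
          _ = wt J t w p.2 := one_mul _
    calc Real.exp (-(M * S * D)) = Real.exp (-(M * S * D)) * ∑ w : Fin t → Fin d, wt J t w p.2 := by
          rw [wt_sum_one hJnorm t p.2, mul_one]
      _ = ∑ w : Fin t → Fin d, Real.exp (-(M * S * D)) * wt J t w p.2 := Finset.mul_sum _ _ _
      _ ≤ A := Finset.sum_le_sum fun w _ => hterm w
  have hRle : RR J t p ≤ 1 - Real.exp (-(M * S * D)) := by linarith [hAR]
  -- compute the lintegral
  rw [coup, lintegral_add_measure, lintegral_sum_smul_dirac _ _ hcmeas,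
    lintegral_sum_smul_dirac _ _ hcmeas]
  have hfirst : (∑ w : Fin t → Fin d, ENNReal.ofReal (mw J t p w) *
      ENNReal.ofReal (min 1 (δ⁻¹ * dTheta θ (app t w p.1) (app t w p.2)))) =
      ENNReal.ofReal (A * B) := by
    have : ∀ w : Fin t → Fin d, ENNReal.ofReal (mw J t p w) *
        ENNReal.ofReal (min 1 (δ⁻¹ * dTheta θ (app t w p.1) (app t w p.2))) =
        ENNReal.ofReal (mw J t p w * B) := by
      intro w
      rw [dTheta_app, ← ENNReal.ofReal_mul (mw_nonneg hJpos p w)]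
    rw [Finset.sum_congr rfl fun w _ => this w,
      ← ENNReal.ofReal_sum_of_nonneg (fun w _ => mul_nonneg (mw_nonneg hJpos p w) hB0),
      ← Finset.sum_mul]
  have hsecond : (∑ pr : (Fin t → Fin d) × (Fin t → Fin d),
      ENNReal.ofReal (ew J t p pr.1 * fw J t p pr.2 / RR J t p) *
      ENNReal.ofReal (min 1 (δ⁻¹ * dTheta θ (app t pr.1 p.1) (app t pr.2 p.2)))) ≤
      ENNReal.ofReal (RR J t p) := by
    have hle : ∀ pr : (Fin t → Fin d) × (Fin t → Fin d),
        ENNReal.ofReal (ew J t p pr.1 * fw J t p pr.2 / RR J t p) *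
        ENNReal.ofReal (min 1 (δ⁻¹ * dTheta θ (app t pr.1 p.1) (app t pr.2 p.2))) ≤
        ENNReal.ofReal (ew J t p pr.1 * fw J t p pr.2 / RR J t p) := by
      intro pr
      have : ENNReal.ofReal (min 1 (δ⁻¹ * dTheta θ (app t pr.1 p.1) (app t pr.2 p.2))) ≤ 1 :=
        ENNReal.ofReal_le_one.mpr (min_le_left _ _)
      calc _ ≤ ENNReal.ofReal (ew J t p pr.1 * fw J t p pr.2 / RR J t p) * 1 :=
            mul_le_mul_right this _
        _ = _ := mul_one _
    calc _ ≤ ∑ pr : (Fin t → Fin d) × (Fin t → Fin d),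
          ENNReal.ofReal (ew J t p pr.1 * fw J t p pr.2 / RR J t p) :=
          Finset.sum_le_sum fun pr _ => hle pr
      _ = ENNReal.ofReal (RR J t p) := by
          rw [← ENNReal.ofReal_sum_of_nonneg (fun pr _ => div_nonneg
            (mul_nonneg (ew_nonneg hJpos p pr.1) (fw_nonneg hJpos p pr.2)) hR0)]
          congr 1
          rw [Fintype.sum_prod_type]
          rw [Finset.sum_congr rfl fun w (_ : w ∈ Finset.univ) => sum_ew_fw_div hJpos hJnorm p w]
          rfl
  calc _ ≤ ENNReal.ofReal (A * B) + ENNReal.ofReal (RR J t p) := by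
        rw [hfirst]; exact add_le_add_right hsecond _
    _ = ENNReal.ofReal (A * B + RR J t p) :=
        (ENNReal.ofReal_add (mul_nonneg hA0 hB0) hR0).symm
    _ ≤ ENNReal.ofReal (α * min 1 (δ⁻¹ * D)) := by
        apply ENNReal.ofReal_le_ofReal
        by_cases hmin : 1 ≤ δ⁻¹ * D
        · rw [min_eq_left hmin, mul_one]
          have hBle : B ≤ δ⁻¹ * θ ^ t := by
            calc B ≤ δ⁻¹ * (θ ^ t * D) := min_le_right _ _
              _ ≤ δ⁻¹ * (θ ^ t * 1) := by
                  apply mul_le_mul_of_nonneg_left _ hδinv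
                  exact mul_le_mul_of_nonneg_left hD1 (pow_nonneg hθ0.le t)
              _ = δ⁻¹ * θ ^ t := by rw [mul_one]
          have hABle : A * B ≤ B := mul_le_of_le_one_left hB0 hA1
          have hexp : Real.exp (-K) ≤ Real.exp (-(M * S * D)) :=
            Real.exp_le_exp.mpr (by linarith)
          linarith
        · push_neg at hmin
          rw [min_eq_right hmin.le]
          have hBle : B ≤ δ⁻¹ * (θ ^ t * D) := min_le_right _ _
          have hABle : A * B ≤ B := mul_le_of_le_one_left hB0 hA1
          have hRle2 : RR J t p ≤ K * D := by
            have h1 : 1 - Real.exp (-(M * S * D)) ≤ M * S * D := by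
              linarith [Real.add_one_le_exp (-(M * S * D))]
            have h2 : M * S * D ≤ K * D := by
              apply mul_le_mul_of_nonneg_right _ hD0
              exact mul_le_mul_of_nonneg_left hSK hM
            linarith
          have hkey : (θ ^ t + δ * K) * (δ⁻¹ * D) ≤ α * (δ⁻¹ * D) :=
            mul_le_mul_of_nonneg_right hα2 (mul_nonneg hδinv hD0)
          have hexpand : (θ ^ t + δ * K) * (δ⁻¹ * D) = δ⁻¹ * (θ ^ t * D) + K * D := by
            field_simp
          linarith
end Coupling
end RuelleAux

open RuelleAux in
/-- for a normalized `d_θ`-Lipschitz potential `log J` there are `δ > 0`,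
`t ≥ 1` and `α ∈ (0,1)` such that, with the equivalent metric
`d(x,y) = min{1, δ⁻¹ d_θ(x,y)}`, the `t`-th iterate of the dual Ruelle operator is an
`α`-contraction in the `1`-Wasserstein distance:
`W₁((ℒ*)ᵗ(μ₁), (ℒ*)ᵗ(μ₂)) ≤ α W₁(μ₁, μ₂)` for all Borel probability measures. -/
theorem dualRuelle_wasserstein_contraction
    (d : ℕ) (θ : ℝ) (hθ0 : 0 < θ) (hθ1 : θ < 1)
    (J : (ℕ → Fin d) → ℝ) (hJpos : ∀ x, 0 < J x)
    (M : ℝ) (hJlip : ∀ u v, |Real.log (J u) - Real.log (J v)| ≤ M * dTheta θ u v)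
    (hJnorm : ∀ x, ∑ a : Fin d, J (cons a x) = 1) :
    ∃ (δ : ℝ) (t : ℕ) (α : ℝ), 0 < δ ∧ 1 ≤ t ∧ 0 < α ∧ α < 1 ∧
      ∀ μ₁ μ₂ : Measure (ℕ → Fin d),
        IsProbabilityMeasure μ₁ → IsProbabilityMeasure μ₂ →
          Wcost (fun p => min 1 (δ⁻¹ * dTheta θ p.1 p.2))
              ((dualRuelle J)^[t] μ₁) ((dualRuelle J)^[t] μ₂) ≤
            α * Wcost (fun p => min 1 (δ⁻¹ * dTheta θ p.1 p.2)) μ₁ μ₂ := by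
  -- replace M with a nonnegative constant
  set M' : ℝ := max M 0 with hM'def
  have hM' : 0 ≤ M' := le_max_right M 0
  have hJlip' : ∀ u v, |Real.log (J u) - Real.log (J v)| ≤ M' * dTheta θ u v := by
    intro u v
    exact le_trans (hJlip u v)
      (mul_le_mul_of_nonneg_right (le_max_left M 0) (dTheta_nonneg hθ0.le u v))
  have hJ : Measurable J := by
    have hF : Measurable (fun u => Real.log (J u)) :=
      measurable_of_lip hθ0.le hθ1 hM' hJlip'
    have hJeq : J = fun x => Real.exp (Real.log (J x)) :=
      funext fun x => (Real.exp_log (hJpos x)).symm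
    rw [hJeq]
    exact Real.measurable_exp.comp hF
  -- constants
  set K : ℝ := M' * (θ / (1 - θ)) with hKdef
  have hK0 : 0 ≤ K := mul_nonneg hM' (div_nonneg hθ0.le (by linarith))
  set ε : ℝ := Real.exp (-K) with hεdef
  have hε0 : 0 < ε := Real.exp_pos _
  have hε1 : ε ≤ 1 := Real.exp_le_one_iff.mpr (neg_nonpos.mpr hK0)
  set δ : ℝ := ε / (8 * (K + 1)) with hδdef
  have hδ : 0 < δ := div_pos hε0 (by linarith)
  obtain ⟨n, hn⟩ := exists_pow_lt_of_lt_one (show (0:ℝ) < δ * (ε/2) by positivity) hθ1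
  set t : ℕ := n + 1 with htdef
  have hθt : θ ^ t ≤ δ * (ε / 2) := by
    calc θ ^ t = θ ^ n * θ := pow_succ θ n
      _ ≤ θ ^ n * 1 := mul_le_mul_of_nonneg_left hθ1.le (pow_nonneg hθ0.le n)
      _ = θ ^ n := mul_one _
      _ ≤ δ * (ε / 2) := hn.le
  set α : ℝ := 1 - ε / 2 with hαdef
  have hα0 : 0 < α := by rw [hαdef]; linarith
  have hαlt : α < 1 := by rw [hαdef]; linarith
  have hδε : δ ≤ ε / 8 := by
    rw [hδdef]
    exact div_le_div_of_nonneg_left hε0.le (by norm_num) (by linarith)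
  have hδK : δ * K ≤ ε / 8 := by
    rw [hδdef, div_mul_eq_mul_div, div_le_div_iff₀ (by linarith) (by norm_num)]
    nlinarith
  have hα1 : δ⁻¹ * θ ^ t + (1 - Real.exp (-(M' * (θ / (1 - θ))))) ≤ α := by
    have h1 : δ⁻¹ * θ ^ t ≤ ε / 2 := by
      calc δ⁻¹ * θ ^ t ≤ δ⁻¹ * (δ * (ε/2)) :=
            mul_le_mul_of_nonneg_left hθt (inv_nonneg.mpr hδ.le)
        _ = ε / 2 := by field_simp
    rw [← hKdef, ← hεdef, hαdef]
    linarith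
  have hα2 : θ ^ t + δ * (M' * (θ / (1 - θ))) ≤ α := by
    rw [← hKdef, hαdef]
    have h2 : θ ^ t ≤ ε / 16 := by nlinarith [hθt, hδε, hε0.le, hε1]
    linarith
  refine ⟨δ, t, α, hδ, Nat.le_add_left 1 n, hα0, hαlt, ?_⟩
  intro μ₁ μ₂ hμ₁ hμ₂
  set c : ((ℕ → Fin d) × (ℕ → Fin d)) → ℝ := fun p => min 1 (δ⁻¹ * dTheta θ p.1 p.2) with hcdef
  have hc0 : ∀ p, 0 ≤ c p := fun p =>
    le_min zero_le_one (mul_nonneg (inv_nonneg.mpr hδ.le) (dTheta_nonneg hθ0.le _ _))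
  have hc1 : ∀ p, c p ≤ 1 := fun p => min_le_left _ _
  have hcR : Measurable c :=
    measurable_const.min ((measurable_dTheta hθ0.le).const_mul δ⁻¹)
  have hcE : Measurable fun q => ENNReal.ofReal (c q) := ENNReal.measurable_ofReal.comp hcR
  -- the claim: for every coupling of (μ₁, μ₂), the LHS is at most α * its cost
  have key : ∀ Γ : Measure ((ℕ → Fin d) × (ℕ → Fin d)),
      Γ.map Prod.fst = μ₁ → Γ.map Prod.snd = μ₂ →
      Wcost c ((dualRuelle J)^[t] μ₁) ((dualRuelle J)^[t] μ₂) ≤ α * ∫ p, c p ∂Γ := by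
    intro Γ hfst hsnd
    have hΓuniv : Γ Set.univ = 1 := by
      have : (Γ.map Prod.fst) Set.univ = Γ Set.univ := by
        rw [Measure.map_apply measurable_fst MeasurableSet.univ, Set.preimage_univ]
      rw [hfst] at this
      rw [← this, measure_univ]
    have hΓprob : IsProbabilityMeasure Γ := ⟨hΓuniv⟩
    set Γ' : Measure ((ℕ → Fin d) × (ℕ → Fin d)) := Γ.bind (coup J t) with hΓ'def
    have hfst' : Γ'.map Prod.fst = (dualRuelle J)^[t] μ₁ := by
      rw [iterate_eq_bind hJ hJpos t μ₁]
      ext s hs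
      rw [Measure.map_apply measurable_fst hs, hΓ'def,
        Measure.bind_apply (measurable_fst hs) (measurable_coup hJ).aemeasurable,
        Measure.bind_apply hs (measurable_ker hJ t).aemeasurable, ← hfst,
        lintegral_map (f := fun x => ker J t x s)
          ((Measure.measurable_coe hs).comp (measurable_ker hJ t)) measurable_fst]
      apply lintegral_congr
      intro p
      rw [← coup_map_fst hJ hJpos hJnorm p, Measure.map_apply measurable_fst hs]
    have hsnd' : Γ'.map Prod.snd = (dualRuelle J)^[t] μ₂ := by
      rw [iterate_eq_bind hJ hJpos t μ₂]
      ext s hs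
      rw [Measure.map_apply measurable_snd hs, hΓ'def,
        Measure.bind_apply (measurable_snd hs) (measurable_coup hJ).aemeasurable,
        Measure.bind_apply hs (measurable_ker hJ t).aemeasurable, ← hsnd,
        lintegral_map (f := fun x => ker J t x s)
          ((Measure.measurable_coe hs).comp (measurable_ker hJ t)) measurable_snd]
      apply lintegral_congr
      intro p
      rw [← coup_map_snd hJ hJpos hJnorm p, Measure.map_apply measurable_snd hs]
    -- the lintegral estimate
    have hLfin : ∫⁻ p, ENNReal.ofReal (c p) ∂Γ ≤ 1 := by
      calc ∫⁻ p, ENNReal.ofReal (c p) ∂Γ ≤ ∫⁻ _, 1 ∂Γ :=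
            lintegral_mono fun p => ENNReal.ofReal_le_one.mpr (hc1 p)
        _ = 1 := by rw [lintegral_one, hΓuniv]
    have hLbound : ∫⁻ q, ENNReal.ofReal (c q) ∂Γ' ≤
        ENNReal.ofReal α * ∫⁻ p, ENNReal.ofReal (c p) ∂Γ := by
      rw [hΓ'def, Measure.lintegral_bind (measurable_coup hJ).aemeasurable hcE.aemeasurable]
      calc ∫⁻ p, (∫⁻ q, ENNReal.ofReal (c q) ∂coup J t p) ∂Γ
          ≤ ∫⁻ p, ENNReal.ofReal (α * c p) ∂Γ := by
            apply lintegral_mono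
            intro p
            exact core_estimate hθ0 hθ1 hM' hJpos hJlip' hJnorm hδ t hα1 hα2 p
        _ = ∫⁻ p, ENNReal.ofReal α * ENNReal.ofReal (c p) ∂Γ := by
            apply lintegral_congr
            intro p
            rw [ENNReal.ofReal_mul hα0.le]
        _ = ENNReal.ofReal α * ∫⁻ p, ENNReal.ofReal (c p) ∂Γ :=
            lintegral_const_mul _ hcE
    have hint' : ∫ q, c q ∂Γ' = (∫⁻ q, ENNReal.ofReal (c q) ∂Γ').toReal :=
      integral_eq_lintegral_of_nonneg_ae (ae_of_all _ hc0) hcR.aestronglyMeasurable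
    have hint : ∫ p, c p ∂Γ = (∫⁻ p, ENNReal.ofReal (c p) ∂Γ).toReal :=
      integral_eq_lintegral_of_nonneg_ae (ae_of_all _ hc0) hcR.aestronglyMeasurable
    have hr' : ∫ q, c q ∂Γ' ≤ α * ∫ p, c p ∂Γ := by
      rw [hint', hint]
      have hne : ENNReal.ofReal α * ∫⁻ p, ENNReal.ofReal (c p) ∂Γ ≠ ⊤ :=
        ENNReal.mul_ne_top ENNReal.ofReal_ne_top
          (lt_of_le_of_lt hLfin ENNReal.one_lt_top).ne
      calc (∫⁻ q, ENNReal.ofReal (c q) ∂Γ').toReal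
          ≤ (ENNReal.ofReal α * ∫⁻ p, ENNReal.ofReal (c p) ∂Γ).toReal :=
            ENNReal.toReal_mono hne hLbound
        _ = α * (∫⁻ p, ENNReal.ofReal (c p) ∂Γ).toReal := by
            rw [ENNReal.toReal_mul, ENNReal.toReal_ofReal hα0.le]
    -- Wcost of the images is at most the cost of Γ'
    have hmem : (∫ q, c q ∂Γ') ∈ {r : ℝ | ∃ Γ₀ : Measure ((ℕ → Fin d) × (ℕ → Fin d)),
        Γ₀.map Prod.fst = (dualRuelle J)^[t] μ₁ ∧ Γ₀.map Prod.snd = (dualRuelle J)^[t] μ₂ ∧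
        r = ∫ p, c p ∂Γ₀} := ⟨Γ', hfst', hsnd', rfl⟩
    have hbdd : BddBelow {r : ℝ | ∃ Γ₀ : Measure ((ℕ → Fin d) × (ℕ → Fin d)),
        Γ₀.map Prod.fst = (dualRuelle J)^[t] μ₁ ∧ Γ₀.map Prod.snd = (dualRuelle J)^[t] μ₂ ∧
        r = ∫ p, c p ∂Γ₀} := by
      refine ⟨0, fun r hr => ?_⟩
      obtain ⟨Γ₀, -, -, hreq⟩ := hr
      rw [hreq]
      exact integral_nonneg hc0
    calc Wcost c ((dualRuelle J)^[t] μ₁) ((dualRuelle J)^[t] μ₂) ≤ ∫ q, c q ∂Γ' :=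
          csInf_le hbdd hmem
      _ ≤ α * ∫ p, c p ∂Γ := hr'
  -- conclude via the infimum over couplings of (μ₁, μ₂)
  have hne2 : {r : ℝ | ∃ Γ : Measure ((ℕ → Fin d) × (ℕ → Fin d)),
      Γ.map Prod.fst = μ₁ ∧ Γ.map Prod.snd = μ₂ ∧ r = ∫ p, c p ∂Γ}.Nonempty := by
    refine ⟨∫ p, c p ∂(μ₁.prod μ₂), μ₁.prod μ₂, ?_, ?_, rfl⟩
    · rw [Measure.map_fst_prod, measure_univ, one_smul]
    · rw [Measure.map_snd_prod, measure_univ, one_smul]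
  have hdiv : Wcost c ((dualRuelle J)^[t] μ₁) ((dualRuelle J)^[t] μ₂) / α ≤
      Wcost c μ₁ μ₂ := by
    apply le_csInf hne2
    intro r hr
    obtain ⟨Γ, hfst, hsnd, hreq⟩ := hr
    rw [div_le_iff₀ hα0, mul_comm]
    rw [hreq]
    exact key Γ hfst hsnd
  have := (div_le_iff₀ hα0).mp hdiv
  calc Wcost c ((dualRuelle J)^[t] μ₁) ((dualRuelle J)^[t] μ₂) ≤ Wcost c μ₁ μ₂ * α := this
    _ = α * Wcost c μ₁ μ₂ := mul_comm _ _
end
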